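/- arXiv:math/0506169 — 9 statements merged into one kernel-verified Lean document; each statement's English description precedes it below -/
import Mathlib

section
/- Let 0<q<1 be a real number, let r≥1 be an integer, let f≥1 be an integer and let χ be a Dirichlet character modulo f with values in ℂ. Then for every complex number s, the family indexed by r-tuples (n₁,...,n_r) of positive integers with terms χ(n₁+⋯+n_r)·q^{n₁+⋯+n_r}·[n₁+⋯+n_r]_q^{−s} is absolutely summable; in particular the multiple Dirichlet q-L-series L_q^r(s,χ) converges for every s ∈ ℂ. -/
/-- The `q`-analogue `[x]_q = (1 - q^x)/(1 - q)` of a real number `x`. -/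
noncomputable def qNum (q x : ℝ) : ℝ := (1 - q ^ x) / (1 - q)

private lemma summable_q_pow_sum (q : ℝ) (hq0 : 0 ≤ q) (hq1 : q < 1) (r : ℕ) :
    Summable (fun n : Fin r → ℕ+ => q ^ (∑ i, (n i : ℕ))) := by
  induction r with
  | zero =>
    exact summable_of_finite_support (Set.Finite.subset (Set.finite_univ) (by simp))
  | succ r ih =>
    have hgeo : Summable (fun n : ℕ+ => q ^ (n : ℕ)) :=
      (summable_geometric_of_lt_one hq0 hq1).subtype _
    have h := (hgeo.mul_of_nonneg ih (fun n => pow_nonneg hq0 _)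
      (fun n => pow_nonneg hq0 _))
    have := ((Fin.consEquiv (fun _ : Fin (r + 1) => ℕ+)).symm.summable_iff
      (f := fun p : ℕ+ × (Fin r → ℕ+) => q ^ (p.1 : ℕ) * q ^ (∑ i, (p.2 i : ℕ)))).mpr h
    refine this.congr fun n => ?_
    simp [Fin.consEquiv, Fin.sum_univ_succ, pow_add, Fin.tail]

/-- For `0 < q < 1`, the family defining the multiple Dirichlet `q`-`L`-series
`L_q^r(s,χ) = Σ_{n₁,…,n_r ≥ 1} χ(n₁+⋯+n_r) q^{n₁+⋯+n_r} [n₁+⋯+n_r]_q^{-s}`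
is absolutely summable for every `s ∈ ℂ`. -/
theorem multiple_q_L_series_summable (q : ℝ) (hq0 : 0 < q) (hq1 : q < 1)
    (r f : ℕ) (hr : 1 ≤ r) (hf : 1 ≤ f) (χ : DirichletCharacter ℂ f) (s : ℂ) :
    Summable (fun n : Fin r → ℕ+ =>
      ‖χ (((∑ i, (n i : ℕ)) : ℕ) : ZMod f) * (q : ℂ) ^ (∑ i, (n i : ℕ)) *
        ((qNum q ((∑ i, (n i : ℕ)) : ℝ) : ℝ) : ℂ) ^ (-s)‖) := by
  have h1q : (0:ℝ) < 1 - q := by linarith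
  set C : ℝ := ((1 - q)⁻¹) ^ |s.re| with hC
  have hbase : (1:ℝ) ≤ (1 - q)⁻¹ := by
    rw [le_inv_comm₀ one_pos h1q]; linarith
  have hC1 : (1:ℝ) ≤ C := Real.one_le_rpow hbase (abs_nonneg _)
  refine Summable.of_nonneg_of_le (fun n => norm_nonneg _)
    (fun n => ?_) (((summable_q_pow_sum q hq0.le hq1 r).mul_left C))
  set m : ℕ := ∑ i, ((n i : ℕ)) with hm
  have hm1 : 1 ≤ m := by
    calc (1:ℕ) ≤ (n ⟨0, hr⟩ : ℕ) := (n ⟨0, hr⟩).2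
    _ ≤ m := Finset.single_le_sum (f := fun i => ((n i : ℕ))) (fun _ _ => Nat.zero_le _)
        (Finset.mem_univ _)
  -- value of qNum
  have hqm : q ^ ((m : ℝ)) = q ^ m := by
    rw [Real.rpow_natCast]
  have hqmle : q ^ m ≤ q := by
    calc q ^ m ≤ q ^ 1 := pow_le_pow_of_le_one hq0.le hq1.le hm1
    _ = q := pow_one q
  have hxpos : (0:ℝ) < qNum q (m : ℝ) := by
    unfold qNum
    rw [hqm]
    apply div_pos _ h1q
    have : q ^ m < 1 := pow_lt_one₀ hq0.le hq1 (by omega)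
    linarith
  have hx1 : (1:ℝ) ≤ qNum q (m : ℝ) := by
    unfold qNum; rw [hqm, le_div_iff₀ h1q, one_mul]; linarith
  have hxle : qNum q (m : ℝ) ≤ (1 - q)⁻¹ := by
    unfold qNum; rw [hqm, div_le_iff₀ h1q, inv_mul_cancel₀ h1q.ne']
    have : 0 < q ^ m := pow_pos hq0 m
    linarith
  have hcpow : ‖(((qNum q (m : ℝ)) : ℝ) : ℂ) ^ (-s)‖ = (qNum q (m : ℝ)) ^ (-s.re) := by
    rw [Complex.norm_cpow_eq_rpow_re_of_pos hxpos, Complex.neg_re]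
  have hcpow_le : (qNum q (m : ℝ)) ^ (-s.re) ≤ C := by
    rcases le_or_gt 0 (-s.re) with ht | ht
    · calc (qNum q (m : ℝ)) ^ (-s.re) ≤ ((1 - q)⁻¹) ^ (-s.re) :=
        Real.rpow_le_rpow (le_trans zero_le_one hx1) hxle ht
      _ ≤ C := Real.rpow_le_rpow_of_exponent_le hbase (neg_le_abs _)
    · calc (qNum q (m : ℝ)) ^ (-s.re) ≤ 1 :=
        Real.rpow_le_one_of_one_le_of_nonpos hx1 ht.le
      _ ≤ C := hC1
  have hnormq : ‖(q : ℂ) ^ m‖ = q ^ m := by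
    rw [norm_pow, Complex.norm_real, Real.norm_of_nonneg hq0.le]
  have hsum : ((m : ℕ) : ℝ) = ∑ i, ((n i : ℕ) : ℝ) := by rw [hm]; push_cast; ring
  rw [← hsum]
  calc ‖χ ((m : ℕ) : ZMod f) * (q : ℂ) ^ m * (((qNum q (m : ℝ)) : ℝ) : ℂ) ^ (-s)‖
      = ‖χ ((m : ℕ) : ZMod f)‖ * ‖(q : ℂ) ^ m‖ * ‖(((qNum q (m : ℝ)) : ℝ) : ℂ) ^ (-s)‖ := by
        rw [norm_mul, norm_mul]
    _ ≤ 1 * (q ^ m) * C := by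
        refine mul_le_mul (mul_le_mul (χ.norm_le_one _) hnormq.le (norm_nonneg _)
          zero_le_one) ?_ (norm_nonneg _) (by positivity)
        rw [hcpow]; exact hcpow_le
    _ = C * q ^ m := by ring
end

section
/- Let 0<q<1 be a real number, let r≥1 be an integer, let f≥1 be an integer and let χ be a Dirichlet character modulo f with values in ℂ. Then for every complex number s with Re(s) > 0, (1/Γ(s)) ∫₀^∞ t^{s−1} ( Σ_{n₁,...,n_r≥1} χ(n₁+⋯+n_r) q^{n₁+⋯+n_r} e^{−[n₁+⋯+n_r]_q t} ) dt = L_q^r(s,χ), where Γ is the complex Gamma function and both the inner series and the integral converge absolutely. -/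
open MeasureTheory

lemma summable_pi_pow {q : ℝ} (hq0 : 0 ≤ q) (hq1 : q < 1) :
    ∀ r : ℕ, Summable (fun n : Fin r → ℕ+ => q ^ (∑ i, (n i : ℕ))) := by
  intro r
  induction r with
  | zero => exact .of_finite
  | succ r IH =>
    have hgeo : Summable (fun n : ℕ+ => q ^ (n : ℕ)) :=
      (summable_geometric_of_lt_one hq0 hq1).comp_injective PNat.coe_injective
    have hmul : Summable (fun p : ℕ+ × (Fin r → ℕ+) =>
        q ^ (p.1 : ℕ) * q ^ (∑ i, (p.2 i : ℕ))) := by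
      apply summable_mul_of_summable_norm (f := fun n : ℕ+ => q ^ (n : ℕ))
        (g := fun n : Fin r → ℕ+ => q ^ (∑ i, (n i : ℕ)))
      · simpa [abs_pow, abs_of_nonneg hq0] using hgeo
      · simpa [abs_pow, abs_of_nonneg hq0] using IH
    refine ((Fin.consEquiv (fun _ : Fin (r + 1) => ℕ+)).summable_iff
      (f := fun n : Fin (r + 1) → ℕ+ => q ^ (∑ i, (n i : ℕ)))).mp (hmul.congr fun p => ?_)
    simp [Fin.consEquiv, Fin.sum_univ_succ, pow_add]


/-- For `0 < q < 1` and `Re s > 0`, the Mellin-type integral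
`(1/Γ(s)) ∫₀^∞ t^{s-1} Σ_{n₁,…,n_r ≥ 1} χ(n₁+⋯+n_r) q^{n₁+⋯+n_r} e^{-[n₁+⋯+n_r]_q t} dt`
equals the multiple Dirichlet `q`-`L`-series `L_q^r(s,χ)`; moreover the inner series
converges absolutely (for every `t > 0`) and the integral converges absolutely. -/
theorem multiple_q_L_mellin (q : ℝ) (hq0 : 0 < q) (hq1 : q < 1)
    (r f : ℕ) (hr : 1 ≤ r) (hf : 1 ≤ f) (χ : DirichletCharacter ℂ f) (s : ℂ)
    (hs : 0 < s.re) :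
    (∀ t : ℝ, 0 < t → Summable (fun n : Fin r → ℕ+ =>
      ‖χ (((∑ i, (n i : ℕ)) : ℕ) : ZMod f) * (q : ℂ) ^ (∑ i, (n i : ℕ)) *
        Complex.exp (-((qNum q ((∑ i, (n i : ℕ)) : ℝ) : ℝ) : ℂ) * (t : ℂ))‖)) ∧
    IntegrableOn (fun t : ℝ => (t : ℂ) ^ (s - 1) *
      ∑' n : Fin r → ℕ+, χ (((∑ i, (n i : ℕ)) : ℕ) : ZMod f) * (q : ℂ) ^ (∑ i, (n i : ℕ)) *
        Complex.exp (-((qNum q ((∑ i, (n i : ℕ)) : ℝ) : ℝ) : ℂ) * (t : ℂ))) (Set.Ioi 0) ∧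
    (1 / Complex.Gamma s) * (∫ t in Set.Ioi (0 : ℝ), (t : ℂ) ^ (s - 1) *
      ∑' n : Fin r → ℕ+, χ (((∑ i, (n i : ℕ)) : ℕ) : ZMod f) * (q : ℂ) ^ (∑ i, (n i : ℕ)) *
        Complex.exp (-((qNum q ((∑ i, (n i : ℕ)) : ℝ) : ℝ) : ℂ) * (t : ℂ))) =
    ∑' n : Fin r → ℕ+, χ (((∑ i, (n i : ℕ)) : ℕ) : ZMod f) * (q : ℂ) ^ (∑ i, (n i : ℕ)) *
      ((qNum q ((∑ i, (n i : ℕ)) : ℝ) : ℝ) : ℂ) ^ (-s) := by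
  -- notation
  set m : (Fin r → ℕ+) → ℕ := fun n => ∑ i, (n i : ℕ) with hm_def
  set a : (Fin r → ℕ+) → ℂ :=
    fun n => χ ((m n : ℕ) : ZMod f) * (q : ℂ) ^ (m n) with ha_def
  set p : (Fin r → ℕ+) → ℝ := fun n => qNum q ((m n : ℕ) : ℝ) with hp_def
  have hm : ∀ n, 1 ≤ m n := by
    intro n
    calc 1 ≤ r := hr
    _ = ∑ _i : Fin r, 1 := by simp
    _ ≤ m n := Finset.sum_le_sum fun i _ => (n i).one_le
  have hpe : ∀ n, p n = (1 - q ^ (m n)) / (1 - q) := by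
    intro n
    rw [hp_def]
    simp only [qNum]
    rw [Real.rpow_natCast]
  have hP1 : ∀ n, 1 ≤ p n := by
    intro n
    rw [hpe n, le_div_iff₀ (by linarith), one_mul]
    have : q ^ (m n) ≤ q ^ 1 := pow_le_pow_of_le_one hq0.le hq1.le (hm n)
    simp only [pow_one] at this
    linarith
  have hP0 : ∀ n, 0 < p n := fun n => lt_of_lt_of_le one_pos (hP1 n)
  -- norm of a
  have ha_norm : ∀ n, ‖a n‖ ≤ q ^ (m n) := by
    intro n
    rw [ha_def]
    simp only [norm_mul, norm_pow, Complex.norm_real, Real.norm_eq_abs,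
      abs_of_nonneg hq0.le]
    exact (mul_le_mul_of_nonneg_right (χ.norm_le_one _) (pow_nonneg hq0.le _)).trans_eq
      (one_mul _)
  have hS : Summable (fun n : Fin r → ℕ+ => q ^ (m n)) := summable_pi_pow hq0.le hq1 r
  -- the exact inner term and its norm bound
  have hterm : ∀ (n : Fin r → ℕ+) (t : ℝ),
      χ (((∑ i, (n i : ℕ)) : ℕ) : ZMod f) * (q : ℂ) ^ (∑ i, (n i : ℕ)) *
        Complex.exp (-((qNum q ((∑ i, (n i : ℕ)) : ℝ) : ℝ) : ℂ) * (t : ℂ)) =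
      a n * ((Real.exp (-p n * t) : ℝ) : ℂ) := by
    intro n t
    have h1 : (∑ i, ((n i : ℕ) : ℝ)) = ((m n : ℕ) : ℝ) := by
      rw [hm_def]; push_cast; ring
    rw [h1]
    simp only [ha_def, hp_def]
    rw [Complex.ofReal_exp, Complex.ofReal_mul, Complex.ofReal_neg]
  have hnorm : ∀ (n : Fin r → ℕ+) (t : ℝ),
      ‖a n * ((Real.exp (-p n * t) : ℝ) : ℂ)‖ = ‖a n‖ * Real.exp (-p n * t) := by
    intro n t
    rw [norm_mul, Complex.norm_real, Real.norm_eq_abs, abs_of_pos (Real.exp_pos _)]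
  have hbound : ∀ (n : Fin r → ℕ+) (t : ℝ), 0 < t →
      ‖a n * ((Real.exp (-p n * t) : ℝ) : ℂ)‖ ≤ q ^ (m n) * Real.exp (-t) := by
    intro n t ht
    rw [hnorm]
    have h1 : Real.exp (-p n * t) ≤ Real.exp (-t) := by
      apply Real.exp_le_exp.mpr
      nlinarith [hP1 n]
    exact mul_le_mul (ha_norm n) h1 (Real.exp_pos _).le (pow_nonneg hq0.le _)
  -- Goal 1
  have goal1 : ∀ t : ℝ, 0 < t → Summable (fun n : Fin r → ℕ+ =>
      ‖χ (((∑ i, (n i : ℕ)) : ℕ) : ZMod f) * (q : ℂ) ^ (∑ i, (n i : ℕ)) *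
        Complex.exp (-((qNum q ((∑ i, (n i : ℕ)) : ℝ) : ℝ) : ℂ) * (t : ℂ))‖) := by
    intro t ht
    apply Summable.of_nonneg_of_le (fun n => norm_nonneg _)
      (fun n => ?_) (hS.mul_right (Real.exp (-t)))
    rw [hterm n t]
    exact hbound n t ht
  -- norm bound on the tsum
  have hbig : ∀ t : ℝ, 0 < t →
      ‖∑' n : Fin r → ℕ+, χ (((∑ i, (n i : ℕ)) : ℕ) : ZMod f) * (q : ℂ) ^ (∑ i, (n i : ℕ)) *
        Complex.exp (-((qNum q ((∑ i, (n i : ℕ)) : ℝ) : ℝ) : ℂ) * (t : ℂ))‖ ≤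
      (∑' n : Fin r → ℕ+, q ^ (m n)) * Real.exp (-t) := by
    intro t ht
    calc ‖∑' n : Fin r → ℕ+, χ (((∑ i, (n i : ℕ)) : ℕ) : ZMod f) * (q : ℂ) ^ (∑ i, (n i : ℕ)) *
        Complex.exp (-((qNum q ((∑ i, (n i : ℕ)) : ℝ) : ℝ) : ℂ) * (t : ℂ))‖
        ≤ ∑' n : Fin r → ℕ+, ‖χ (((∑ i, (n i : ℕ)) : ℕ) : ZMod f) * (q : ℂ) ^ (∑ i, (n i : ℕ)) *
          Complex.exp (-((qNum q ((∑ i, (n i : ℕ)) : ℝ) : ℝ) : ℂ) * (t : ℂ))‖ :=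
        norm_tsum_le_tsum_norm (goal1 t ht)
    _ ≤ ∑' n : Fin r → ℕ+, q ^ (m n) * Real.exp (-t) := by
        refine Summable.tsum_le_tsum (fun n => ?_) (goal1 t ht) (hS.mul_right _)
        rw [hterm n t]
        exact hbound n t ht
    _ = (∑' n : Fin r → ℕ+, q ^ (m n)) * Real.exp (-t) := tsum_mul_right
  refine ⟨goal1, ?_, ?_⟩
  · -- integrability
    apply Integrable.mono'
      ((Real.GammaIntegral_convergent hs).const_mul (∑' n : Fin r → ℕ+, q ^ (m n)))
    · apply AEStronglyMeasurable.mul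
      · refine (ContinuousOn.aestronglyMeasurable (fun t ht => ?_) measurableSet_Ioi)
        exact (Complex.continuousAt_ofReal_cpow_const t (s - 1)
          (Or.inr (ne_of_gt ht))).continuousWithinAt
      · refine (continuousOn_tsum (fun n => ?_) hS fun n t ht => ?_).aestronglyMeasurable
          measurableSet_Ioi
        · exact (continuous_const.mul (Complex.continuous_exp.comp
            (continuous_const.mul Complex.continuous_ofReal))).continuousOn
        · have ht' : (0:ℝ) < t := ht
          rw [hterm n t, hnorm]
          have h1 : Real.exp (-p n * t) ≤ 1 := by
            rw [Real.exp_le_one_iff]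
            nlinarith [hP0 n]
          calc ‖a n‖ * Real.exp (-p n * t) ≤ q ^ (m n) * 1 :=
              mul_le_mul (ha_norm n) h1 (Real.exp_pos _).le (pow_nonneg hq0.le _)
          _ = q ^ (m n) := mul_one _
    · filter_upwards [ae_restrict_mem measurableSet_Ioi] with t ht
      have ht' : (0:ℝ) < t := ht
      rw [norm_mul]
      have h1 : ‖(t:ℂ) ^ (s - 1)‖ = t ^ (s.re - 1) := by
        rw [Complex.norm_cpow_eq_rpow_re_of_pos ht', Complex.sub_re,
          Complex.one_re]
      rw [h1]
      calc t ^ (s.re - 1) * ‖∑' n : Fin r → ℕ+, χ (((∑ i, (n i : ℕ)) : ℕ) : ZMod f) *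
            (q : ℂ) ^ (∑ i, (n i : ℕ)) *
            Complex.exp (-((qNum q ((∑ i, (n i : ℕ)) : ℝ) : ℝ) : ℂ) * (t : ℂ))‖
          ≤ t ^ (s.re - 1) * ((∑' n : Fin r → ℕ+, q ^ (m n)) * Real.exp (-t)) :=
          mul_le_mul_of_nonneg_left (hbig t ht') (Real.rpow_nonneg ht'.le _)
      _ = (∑' n : Fin r → ℕ+, q ^ (m n)) * (Real.exp (-t) * t ^ (s.re - 1)) := by ring
  · -- the identity
    have hF : ∀ t ∈ Set.Ioi (0:ℝ), HasSum
        (fun n : Fin r → ℕ+ => a n * ((Real.exp (-p n * t) : ℝ) : ℂ))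
        (∑' n : Fin r → ℕ+, χ (((∑ i, (n i : ℕ)) : ℕ) : ZMod f) * (q : ℂ) ^ (∑ i, (n i : ℕ)) *
          Complex.exp (-((qNum q ((∑ i, (n i : ℕ)) : ℝ) : ℝ) : ℂ) * (t : ℂ))) := by
      intro t ht
      have heq : (fun n : Fin r → ℕ+ => a n * ((Real.exp (-p n * t) : ℝ) : ℂ)) =
          fun n : Fin r → ℕ+ => χ (((∑ i, (n i : ℕ)) : ℕ) : ZMod f) *
            (q : ℂ) ^ (∑ i, (n i : ℕ)) *
            Complex.exp (-((qNum q ((∑ i, (n i : ℕ)) : ℝ) : ℝ) : ℂ) * (t : ℂ)) :=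
        funext fun n => (hterm n t).symm
      rw [heq]
      exact ((goal1 t ht).of_norm).hasSum
    have h_sum : Summable (fun n : Fin r → ℕ+ => ‖a n‖ / p n ^ s.re) := by
      refine Summable.of_nonneg_of_le
        (fun n => div_nonneg (norm_nonneg _) (Real.rpow_nonneg (hP0 n).le _))
        (fun n => ?_) hS
      exact (div_le_self (norm_nonneg _) (Real.one_le_rpow (hP1 n) hs.le)).trans (ha_norm n)
    have hmel := hasSum_mellin (fun n => Or.inr (hP0 n)) hs hF h_sum
    have hint := hmel.tsum_eq
    rw [mellin] at hint
    simp only [smul_eq_mul] at hint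
    rw [← hint]
    have hGamma := Complex.Gamma_ne_zero_of_re_pos hs
    have step1 : (∑' n : Fin r → ℕ+, Complex.Gamma s * a n / ((p n : ℝ) : ℂ) ^ s)
        = Complex.Gamma s * ∑' n : Fin r → ℕ+, a n * ((p n : ℝ) : ℂ) ^ (-s) := by
      rw [← tsum_mul_left]
      exact tsum_congr fun n => by
        rw [Complex.cpow_neg, mul_div_assoc, div_eq_mul_inv]
    rw [step1, ← mul_assoc, one_div, inv_mul_cancel₀ hGamma, one_mul]
    refine tsum_congr fun n => ?_
    have h1 : (∑ i, ((n i : ℕ) : ℝ)) = ((m n : ℕ) : ℝ) := by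
      rw [hm_def]; push_cast; ring
    rw [h1]
end

section
/- Let 0<q<1 be a real number, let r≥1 and F≥1 be integers, and let a₁,...,a_r be integers with 0 < a_i ≤ F. Then for every complex number s, H_{r,q}(s; a₁,...,a_r | F) = [F]_q^{−s} · ζ_{r,q^F}(s, (a₁+⋯+a_r)/F), where both series converge absolutely. -/
/-- The bijection `n ↦ (a i + F * n i)` between `Fin r → ℕ` and tuples of positive
integers congruent to `a i` mod `F`. -/
def modEquiv (r F : ℕ) (hF : 1 ≤ F) (a : Fin r → ℕ) (ha : ∀ i, 1 ≤ a i ∧ a i ≤ F) :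
    (Fin r → ℕ) ≃ {m : Fin r → ℕ+ // ∀ i, (m i : ℕ) ≡ a i [MOD F]} where
  toFun n := ⟨fun i => ⟨a i + F * n i, by have := (ha i).1; omega⟩, fun i => by
    simpa [Nat.ModEq] using Nat.add_mul_mod_self_left (a i) F (n i)⟩
  invFun m := fun i => ((m.1 i : ℕ) - a i) / F
  left_inv n := by
    funext i
    show (a i + F * n i - a i) / F = n i
    rw [Nat.add_sub_cancel_left]
    exact Nat.mul_div_cancel_left _ (by omega)
  right_inv m := by
    ext i
    refine PNat.coe_inj.mp ?_
    show a i + F * ((↑(m.1 i) - a i) / F) = ↑(m.1 i)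
    have hm1 : 1 ≤ (m.1 i : ℕ) := (m.1 i).2
    have hle : a i ≤ (m.1 i : ℕ) := by
      by_contra h
      push_neg at h
      have hd : F ∣ a i - (m.1 i : ℕ) := (Nat.modEq_iff_dvd' h.le).mp (m.2 i)
      have := Nat.le_of_dvd (by omega) hd
      have := (ha i).2
      omega
    have hd : F ∣ (m.1 i : ℕ) - a i := (Nat.modEq_iff_dvd' hle).mp (m.2 i).symm
    rw [Nat.mul_div_cancel' hd]
    omega

lemma modEquiv_coe (r F : ℕ) (hF : 1 ≤ F) (a : Fin r → ℕ) (ha : ∀ i, 1 ≤ a i ∧ a i ≤ F)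
    (n : Fin r → ℕ) (i : Fin r) :
    (((modEquiv r F hF a ha n : Fin r → ℕ+)) i : ℕ) = a i + F * n i := rfl

/-- Summability of `x ^ (n₁ + ⋯ + n_r)` over all tuples. -/
lemma summable_pow_sum {x : ℝ} (hx0 : 0 ≤ x) (hx1 : x < 1) :
    ∀ r : ℕ, Summable (fun n : Fin r → ℕ => x ^ (∑ i, n i)) := by
  intro r
  induction r with
  | zero => exact Summable.of_finite
  | succ k ih =>
    rw [← (Fin.consEquiv fun _ : Fin (k+1) => ℕ).summable_iff]
    have hs := (summable_geometric_of_lt_one hx0 hx1).mul_of_nonneg ih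
      (fun n => pow_nonneg hx0 n) (fun n => pow_nonneg hx0 _)
    refine hs.congr fun p => ?_
    simp [Fin.sum_cons, pow_add]

set_option maxHeartbeats 1000000 in
/-- For `0 < q < 1`, integers `r, F ≥ 1` and integers `0 < aᵢ ≤ F`, the partial multiple
`q`-zeta function satisfies `H_{r,q}(s; a₁,…,a_r | F) = [F]_q^{-s} ζ_{r,q^F}(s, (a₁+⋯+a_r)/F)`
for every `s ∈ ℂ`, both series converging absolutely. -/
theorem partial_multiple_q_zeta_eq (q : ℝ) (hq0 : 0 < q) (hq1 : q < 1)
    (r F : ℕ) (hr : 1 ≤ r) (hF : 1 ≤ F) (a : Fin r → ℕ)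
    (ha : ∀ i, 1 ≤ a i ∧ a i ≤ F) (s : ℂ) :
    Summable (fun m : {m : Fin r → ℕ+ // ∀ i, (m i : ℕ) ≡ a i [MOD F]} =>
      ‖(q : ℂ) ^ (∑ i, ((m : Fin r → ℕ+) i : ℕ)) *
        ((qNum q ((∑ i, ((m : Fin r → ℕ+) i : ℕ)) : ℝ) : ℝ) : ℂ) ^ (-s)‖) ∧
    Summable (fun n : Fin r → ℕ =>
      ‖(((q ^ F) ^ (((∑ i, n i : ℕ) : ℝ) + ((∑ i, a i : ℕ) : ℝ) / (F : ℝ)) : ℝ) : ℂ) *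
        ((qNum (q ^ F) (((∑ i, n i : ℕ) : ℝ) + ((∑ i, a i : ℕ) : ℝ) / (F : ℝ)) : ℝ) : ℂ) ^
          (-s)‖) ∧
    (∑' m : {m : Fin r → ℕ+ // ∀ i, (m i : ℕ) ≡ a i [MOD F]},
      (q : ℂ) ^ (∑ i, ((m : Fin r → ℕ+) i : ℕ)) *
        ((qNum q ((∑ i, ((m : Fin r → ℕ+) i : ℕ)) : ℝ) : ℝ) : ℂ) ^ (-s)) =
    ((qNum q (F : ℝ) : ℝ) : ℂ) ^ (-s) *
      ∑' n : Fin r → ℕ,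
        (((q ^ F) ^ (((∑ i, n i : ℕ) : ℝ) + ((∑ i, a i : ℕ) : ℝ) / (F : ℝ)) : ℝ) : ℂ) *
          ((qNum (q ^ F) (((∑ i, n i : ℕ) : ℝ) + ((∑ i, a i : ℕ) : ℝ) / (F : ℝ)) : ℝ) : ℂ) ^
            (-s) := by
  have hF0 : (0:ℝ) < F := by exact_mod_cast hF
  have h1q : (0:ℝ) < 1 - q := by linarith
  have hqF1 : q ^ F < 1 := pow_lt_one₀ hq0.le hq1 (by omega)
  have hqF0 : (0:ℝ) < q ^ F := pow_pos hq0 F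
  have h1qF : (0:ℝ) < 1 - q ^ F := by linarith
  set A : ℕ := ∑ i, a i with hAdef
  have hA1 : 1 ≤ A := by
    calc 1 ≤ r := hr
    _ = ∑ i : Fin r, 1 := by simp
    _ ≤ A := Finset.sum_le_sum fun i _ => (ha i).1
  -- abbreviations
  set Fc : ℕ → ℂ := fun M => (q:ℂ) ^ M * ((qNum q (M:ℝ) : ℝ) : ℂ) ^ (-s) with hFc
  set G : ℕ → ℂ := fun N =>
    (((q ^ F) ^ ((N:ℝ) + (A:ℝ)/(F:ℝ)) : ℝ) : ℂ) *
      ((qNum (q ^ F) ((N:ℝ) + (A:ℝ)/(F:ℝ)) : ℝ) : ℂ) ^ (-s) with hG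
  set K : ℂ := ((qNum q (F:ℝ) : ℝ) : ℂ) ^ (-s) with hK
  -- positivity facts about qNum
  have hQFpos : 0 < qNum q (F:ℝ) := by
    unfold qNum
    rw [Real.rpow_natCast]
    exact div_pos h1qF h1q
  -- per-N facts
  have hxpos : ∀ N : ℕ, 0 < (N:ℝ) + (A:ℝ)/(F:ℝ) := fun N => by
    have : (0:ℝ) < (A:ℝ)/(F:ℝ) := div_pos (by exact_mod_cast hA1) hF0
    positivity
  have hP : ∀ N : ℕ, (q ^ F : ℝ) ^ ((N:ℝ) + (A:ℝ)/(F:ℝ)) = q ^ (A + F * N) := by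
    intro N
    rw [← Real.rpow_natCast q F, ← Real.rpow_mul hq0.le, ← Real.rpow_natCast q (A + F * N)]
    congr 1
    push_cast
    field_simp
    ring
  have hQpos : ∀ N : ℕ, 0 < qNum (q ^ F) ((N:ℝ) + (A:ℝ)/(F:ℝ)) := by
    intro N
    unfold qNum
    have : (q ^ F : ℝ) ^ ((N:ℝ) + (A:ℝ)/(F:ℝ)) < 1 :=
      Real.rpow_lt_one hqF0.le hqF1 (hxpos N)
    exact div_pos (by linarith) h1qF
  have hQrel : ∀ N : ℕ, qNum q ((A + F * N : ℕ) : ℝ) =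
      qNum q (F:ℝ) * qNum (q ^ F) ((N:ℝ) + (A:ℝ)/(F:ℝ)) := by
    intro N
    unfold qNum
    rw [hP N, Real.rpow_natCast, Real.rpow_natCast]
    have hMq : q ^ (A + F * N) < 1 := pow_lt_one₀ hq0.le hq1 (by omega)
    field_simp
  -- the key pointwise identity
  have key : ∀ N : ℕ, Fc (A + F * N) = K * G N := by
    intro N
    rw [hFc, hG, hK]
    simp only
    rw [hQrel N, Complex.ofReal_mul, Complex.mul_cpow_ofReal_nonneg hQFpos.le (hQpos N).le, hP N]
    push_cast
    ring
  -- bound on ‖G N‖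
  set t : ℝ := (-s).re with ht
  set L : ℝ := (1 - q) / (1 - q ^ F) with hL
  set U : ℝ := (1 - q ^ F)⁻¹ with hU
  have hLpos : 0 < L := div_pos h1q h1qF
  set C : ℝ := max (L ^ t) (U ^ t) with hC
  have hQbounds : ∀ N : ℕ, L ≤ qNum (q ^ F) ((N:ℝ) + (A:ℝ)/(F:ℝ)) ∧
      qNum (q ^ F) ((N:ℝ) + (A:ℝ)/(F:ℝ)) ≤ U := by
    intro N
    have hxge : (F:ℝ)⁻¹ ≤ (N:ℝ) + (A:ℝ)/(F:ℝ) := by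
      have h1A : (1:ℝ) ≤ (A:ℝ) := by exact_mod_cast hA1
      have : (F:ℝ)⁻¹ = 1 / F := one_div _ |>.symm
      rw [this]
      have : (1:ℝ)/F ≤ (A:ℝ)/F := by gcongr
      have hN : (0:ℝ) ≤ N := Nat.cast_nonneg N
      linarith
    have hple : (q ^ F : ℝ) ^ ((N:ℝ) + (A:ℝ)/(F:ℝ)) ≤ q := by
      have h1 : (q ^ F : ℝ) ^ ((N:ℝ) + (A:ℝ)/(F:ℝ)) ≤ (q ^ F : ℝ) ^ ((F:ℝ)⁻¹) :=
        Real.rpow_le_rpow_of_exponent_ge hqF0 hqF1.le hxge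
      have h2 : (q ^ F : ℝ) ^ ((F:ℝ)⁻¹) = q := by
        rw [← Real.rpow_natCast q F, ← Real.rpow_mul hq0.le,
          mul_inv_cancel₀ (ne_of_gt hF0), Real.rpow_one]
      linarith
    have hpge : (0:ℝ) ≤ (q ^ F : ℝ) ^ ((N:ℝ) + (A:ℝ)/(F:ℝ)) := Real.rpow_nonneg hqF0.le _
    constructor
    · unfold qNum
      rw [hL]
      gcongr <;> linarith
    · unfold qNum
      rw [hU, inv_eq_one_div]
      gcongr <;> linarith
  have hbound : ∀ N : ℕ, ‖G N‖ ≤ C * (q ^ F) ^ N := by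
    intro N
    rw [hG]
    simp only
    rw [norm_mul,
      Complex.norm_cpow_eq_rpow_re_of_pos (hQpos N), Complex.norm_real, Real.norm_eq_abs,
      abs_of_pos (Real.rpow_pos_of_pos hqF0 _)]
    have hQt : (qNum (q ^ F) ((N:ℝ) + (A:ℝ)/(F:ℝ))) ^ t ≤ C := by
      rcases le_or_gt 0 t with h | h
      · exact le_trans (Real.rpow_le_rpow (hQpos N).le (hQbounds N).2 h) (le_max_right _ _)
      · exact le_trans (Real.rpow_le_rpow_of_nonpos hLpos (hQbounds N).1 h.le) (le_max_left _ _)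
    have hPle : (q ^ F : ℝ) ^ ((N:ℝ) + (A:ℝ)/(F:ℝ)) ≤ (q ^ F) ^ N := by
      rw [hP N, pow_add, pow_mul]
      have hqA : q ^ A ≤ 1 := pow_le_one₀ hq0.le hq1.le
      nlinarith [pow_pos hqF0 N, pow_pos hq0 A]
    calc (q ^ F : ℝ) ^ ((N:ℝ) + (A:ℝ)/(F:ℝ)) * (qNum (q ^ F) ((N:ℝ) + (A:ℝ)/(F:ℝ))) ^ t
        ≤ (q ^ F) ^ N * C := by
          apply mul_le_mul hPle hQt (Real.rpow_nonneg (hQpos N).le _) (pow_nonneg hqF0.le N)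
      _ = C * (q ^ F) ^ N := mul_comm _ _
  -- summability of the RHS
  have hGsum : Summable fun n : Fin r → ℕ => ‖G (∑ i, n i)‖ := by
    exact Summable.of_nonneg_of_le (fun n => norm_nonneg _) (fun n => hbound (∑ i, n i))
      ((summable_pow_sum hqF0.le hqF1 r).mul_left C)
  -- the equivalence
  have hsum_e : ∀ n : Fin r → ℕ,
      (∑ i, (((modEquiv r F hF a ha n : Fin r → ℕ+)) i : ℕ)) = A + F * ∑ i, n i := by
    intro n
    simp only [modEquiv_coe r F hF a ha, Finset.sum_add_distrib, ← Finset.mul_sum, hAdef]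
  have hfe : ∀ n : Fin r → ℕ,
      (q : ℂ) ^ (∑ i, (((modEquiv r F hF a ha n : Fin r → ℕ+)) i : ℕ)) *
        ((qNum q ((∑ i, (((modEquiv r F hF a ha n : Fin r → ℕ+)) i : ℕ)) : ℝ) : ℝ) : ℂ) ^ (-s)
      = K * G (∑ i, n i) := by
    intro n
    rw [hsum_e n, ← Nat.cast_sum, hsum_e n]
    exact key (∑ i, n i)
  have hFsum : Summable (fun m : {m : Fin r → ℕ+ // ∀ i, (m i : ℕ) ≡ a i [MOD F]} =>
      ‖(q : ℂ) ^ (∑ i, ((m : Fin r → ℕ+) i : ℕ)) *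
        ((qNum q ((∑ i, ((m : Fin r → ℕ+) i : ℕ)) : ℝ) : ℝ) : ℂ) ^ (-s)‖) := by
    rw [← (modEquiv r F hF a ha).summable_iff]
    refine (hGsum.mul_left ‖K‖).congr fun n => ?_
    show ‖K‖ * ‖G (∑ i, n i)‖ =
      ‖(q : ℂ) ^ (∑ i, (((modEquiv r F hF a ha n : Fin r → ℕ+)) i : ℕ)) *
        ((qNum q ((∑ i, (((modEquiv r F hF a ha n : Fin r → ℕ+)) i : ℕ)) : ℝ) : ℝ) : ℂ) ^ (-s)‖
    rw [hfe n]
    exact (norm_mul _ _).symm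
  refine ⟨hFsum, hGsum, ?_⟩
  rw [← (modEquiv r F hF a ha).tsum_eq]
  calc (∑' n : Fin r → ℕ,
      (q : ℂ) ^ (∑ i, (((modEquiv r F hF a ha n : Fin r → ℕ+)) i : ℕ)) *
        ((qNum q ((∑ i, (((modEquiv r F hF a ha n : Fin r → ℕ+)) i : ℕ)) : ℝ) : ℝ) : ℂ) ^ (-s))
      = ∑' n : Fin r → ℕ, K * G (∑ i, n i) := by
        exact tsum_congr fun n => hfe n
    _ = K * ∑' n : Fin r → ℕ, G (∑ i, n i) := tsum_mul_left
end

section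
/- Let 0<q<1 be a real number, let r≥1 be an integer and let x>0 be a real number. Then for every t ∈ ℂ the series Σ_{n₁,...,n_r≥0} q^{x+n₁+⋯+n_r} e^{[x+n₁+⋯+n_r]_q t} converges absolutely, and the function G_{r,q,x}(t) = (−t)^r Σ_{n₁,...,n_r≥0} q^{x+n₁+⋯+n_r} e^{[x+n₁+⋯+n_r]_q t} is complex-analytic (entire) on all of ℂ. -/
/-- The generating function `G_{r,q,x}(t) = (-t)^r Σ_{n₁,…,n_r ≥ 0} q^{x+n₁+⋯+n_r}
e^{[x+n₁+⋯+n_r]_q t}` of the multiple `q`-Bernoulli polynomials. -/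
noncomputable def multipleQBernoulliGen (q : ℝ) (r : ℕ) (x : ℝ) (t : ℂ) : ℂ :=
  (-t) ^ r * ∑' n : Fin r → ℕ,
    ((q ^ (x + ((∑ i, n i : ℕ) : ℝ)) : ℝ) : ℂ) *
      Complex.exp (((qNum q (x + ((∑ i, n i : ℕ) : ℝ)) : ℝ) : ℂ) * t)

/-- Summability of the multi-geometric series over `Fin r → ℕ`. -/
lemma summable_geo_pi {q : ℝ} (hq0 : 0 ≤ q) (hq1 : q < 1) (r : ℕ) :
    Summable (fun n : Fin r → ℕ => q ^ (∑ i, n i)) := by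
  induction r with
  | zero => exact Summable.of_finite
  | succ r ih =>
    have h := (summable_geometric_of_lt_one hq0 hq1).mul_of_nonneg ih
      (fun n => pow_nonneg hq0 n) (fun n => pow_nonneg hq0 _)
    rw [← (Fin.consEquiv (fun _ : Fin (r + 1) => ℕ)).summable_iff]
    refine h.congr fun p => ?_
    simp [Fin.sum_cons, pow_add]

lemma qNum_bounds {q : ℝ} (hq0 : 0 < q) (hq1 : q < 1) {y : ℝ} (hy : 0 < y) :
    0 ≤ qNum q y ∧ qNum q y ≤ 1 / (1 - q) := by
  have h1q : 0 < 1 - q := by linarith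
  have hqy0 : 0 < q ^ y := Real.rpow_pos_of_pos hq0 y
  have hqy1 : q ^ y ≤ 1 := by
    calc q ^ y ≤ 1 ^ y := Real.rpow_le_rpow hq0.le hq1.le hy.le
    _ = 1 := Real.one_rpow y
  constructor
  · exact div_nonneg (by linarith) h1q.le
  · exact div_le_div_of_nonneg_right (by linarith) h1q.le

/-- For `0 < q < 1`, `r ≥ 1` and real `x > 0`, the series
`Σ_{n₁,…,n_r ≥ 0} q^{x+n₁+⋯+n_r} e^{[x+n₁+⋯+n_r]_q t}` converges absolutely for every
`t ∈ ℂ`, and `G_{r,q,x}` is entire. -/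
theorem multipleQBernoulliGen_entire (q : ℝ) (hq0 : 0 < q) (hq1 : q < 1)
    (r : ℕ) (hr : 1 ≤ r) (x : ℝ) (hx : 0 < x) :
    (∀ t : ℂ, Summable (fun n : Fin r → ℕ =>
      ‖((q ^ (x + ((∑ i, n i : ℕ) : ℝ)) : ℝ) : ℂ) *
        Complex.exp (((qNum q (x + ((∑ i, n i : ℕ) : ℝ)) : ℝ) : ℂ) * t)‖)) ∧
    AnalyticOnNhd ℂ (multipleQBernoulliGen q r x) Set.univ := by
  have h1q : 0 < 1 - q := by linarith
  -- the key norm bound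
  have key : ∀ (R : ℝ) (n : Fin r → ℕ) (t : ℂ), ‖t‖ ≤ R →
      ‖((q ^ (x + ((∑ i, n i : ℕ) : ℝ)) : ℝ) : ℂ) *
        Complex.exp (((qNum q (x + ((∑ i, n i : ℕ) : ℝ)) : ℝ) : ℂ) * t)‖ ≤
      (q ^ x * Real.exp (R / (1 - q))) * q ^ (∑ i, n i) := by
    intro R n t ht
    set y : ℝ := x + ((∑ i, n i : ℕ) : ℝ) with hy
    have hy0 : 0 < y := by positivity
    have hqy0 : 0 < q ^ y := Real.rpow_pos_of_pos hq0 y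
    obtain ⟨hc0, hc1⟩ := qNum_bounds hq0 hq1 hy0
    have hR : 0 ≤ R := le_trans (norm_nonneg t) ht
    rw [norm_mul, Complex.norm_exp]
    have h1 : ‖((q ^ y : ℝ) : ℂ)‖ = q ^ y := by
      rw [Complex.norm_real, Real.norm_of_nonneg hqy0.le]
    have h2 : (((qNum q y : ℝ) : ℂ) * t).re ≤ R / (1 - q) := by
      have : (((qNum q y : ℝ) : ℂ) * t).re = qNum q y * t.re := by
        simp [Complex.mul_re]
      rw [this]
      calc qNum q y * t.re ≤ qNum q y * ‖t‖ := by
            apply mul_le_mul_of_nonneg_left _ hc0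
            exact le_trans (Complex.re_le_norm t) le_rfl
        _ ≤ (1 / (1 - q)) * R := by
            apply mul_le_mul hc1 ht (norm_nonneg t) (by positivity)
        _ = R / (1 - q) := by ring
    have h3 : q ^ y = q ^ x * q ^ (∑ i, n i) := by
      rw [hy, Real.rpow_add hq0, Real.rpow_natCast]
    rw [h1, h3]
    calc q ^ x * q ^ (∑ i, n i) * Real.exp ((((qNum q y : ℝ) : ℂ) * t).re)
        ≤ q ^ x * q ^ (∑ i, n i) * Real.exp (R / (1 - q)) := by
          apply mul_le_mul_of_nonneg_left (Real.exp_le_exp.2 h2)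
          positivity
      _ = (q ^ x * Real.exp (R / (1 - q))) * q ^ (∑ i, n i) := by ring
  have hsum : ∀ R : ℝ, Summable (fun n : Fin r → ℕ =>
      (q ^ x * Real.exp (R / (1 - q))) * q ^ (∑ i, n i)) :=
    fun R => (summable_geo_pi hq0.le hq1 r).mul_left _
  constructor
  · intro t
    refine Summable.of_nonneg_of_le (fun n => norm_nonneg _)
      (fun n => key ‖t‖ n t le_rfl) (hsum ‖t‖)
  · rw [Complex.analyticOnNhd_univ_iff_differentiable]
    have hF : Differentiable ℂ (fun t : ℂ => ∑' n : Fin r → ℕ,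
        ((q ^ (x + ((∑ i, n i : ℕ) : ℝ)) : ℝ) : ℂ) *
          Complex.exp (((qNum q (x + ((∑ i, n i : ℕ) : ℝ)) : ℝ) : ℂ) * t)) := by
      intro t₀
      have hball : DifferentiableOn ℂ (fun t : ℂ => ∑' n : Fin r → ℕ,
          ((q ^ (x + ((∑ i, n i : ℕ) : ℝ)) : ℝ) : ℂ) *
            Complex.exp (((qNum q (x + ((∑ i, n i : ℕ) : ℝ)) : ℝ) : ℂ) * t))
          (Metric.ball 0 (‖t₀‖ + 1)) := by
        apply Complex.differentiableOn_tsum_of_summable_norm (hsum (‖t₀‖ + 1))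
        · intro n
          apply DifferentiableOn.const_mul
          exact (Complex.differentiable_exp.comp
            ((differentiable_const _).mul differentiable_id)).differentiableOn
        · exact Metric.isOpen_ball
        · intro n w hw
          apply key (‖t₀‖ + 1) n w
          have := Metric.mem_ball.1 hw
          rw [dist_zero_right] at this
          exact this.le
      exact hball.differentiableAt (Metric.isOpen_ball.mem_nhds (by
        simp only [Metric.mem_ball, dist_zero_right]; linarith [norm_nonneg t₀]))
    unfold multipleQBernoulliGen
    exact ((differentiable_id.neg.pow r).mul hF)
end

section
/- Let 0<q<1 be a real number, let r≥1 be an integer, let x>0 be a real number and let n≥0 be an integer. Then Σ_{n₁,...,n_r≥0} q^{x+n₁+⋯+n_r} [x+n₁+⋯+n_r]_q^{n} = (−1)^r · (n!/(n+r)!) · B^{(r)}_{n+r,q}(x), i.e. the multiple q-Hurwitz zeta series ζ_{r,q}(s,x) evaluated at s = −n equals (−1)^r n!/(n+r)! times the multiple q-Bernoulli polynomial B^{(r)}_{n+r,q}(x). -/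
/-- The multiple `q`-Bernoulli polynomial `B^{(r)}_{m,q}(x)`, the `m`-th derivative of
`G_{r,q,x}` at `t = 0`. -/
noncomputable def multipleQBernoulli (q : ℝ) (r m : ℕ) (x : ℝ) : ℂ :=
  iteratedDeriv m (multipleQBernoulliGen q r x) 0

section Aux

open scoped Nat

lemma summable_pow_sum_s5 {q : ℝ} (hq0 : 0 ≤ q) (hq1 : q < 1) :
    ∀ r : ℕ, Summable (fun m : Fin r → ℕ ↦ q ^ (∑ i, m i)) := by
  intro r
  induction r with
  | zero => exact .of_finite
  | succ r ih =>
    rw [← (Fin.consEquiv (fun _ : Fin (r + 1) => ℕ)).summable_iff]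
    have h0 : ((fun m : Fin (r + 1) → ℕ ↦ q ^ (∑ i, m i)) ∘ (Fin.consEquiv fun _ => ℕ))
        = fun p : ℕ × (Fin r → ℕ) ↦ q ^ p.1 * q ^ (∑ i, p.2 i) := by
      funext p
      show q ^ (∑ i, Fin.cons p.1 p.2 i) = _
      rw [Fin.sum_cons, pow_add]
    rw [h0]
    exact Summable.mul_of_nonneg (g := fun m : Fin r → ℕ ↦ q ^ (∑ i, m i))
      (summable_geometric_of_lt_one hq0 hq1) ih
      (fun _ => pow_nonneg hq0 _) (fun _ => pow_nonneg hq0 _)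

/-- `A m = q^(x + n₁ + ⋯ + n_r)`. -/
noncomputable def Acoef (q x : ℝ) {r : ℕ} (m : Fin r → ℕ) : ℝ :=
  q ^ (x + ((∑ i, m i : ℕ) : ℝ))

/-- `C m = [x + n₁ + ⋯ + n_r]_q`. -/
noncomputable def Ccoef (q x : ℝ) {r : ℕ} (m : Fin r → ℕ) : ℝ :=
  qNum q (x + ((∑ i, m i : ℕ) : ℝ))

/-- `b j = Σ_m A m * (C m)^j`, the value of the multiple `q`-Hurwitz zeta series at `-j`. -/
noncomputable def bcoef (q x : ℝ) (r : ℕ) (j : ℕ) : ℂ :=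
  ∑' m : Fin r → ℕ, ((Acoef q x m : ℝ) : ℂ) * ((Ccoef q x m : ℝ) : ℂ) ^ j

/-- Summand of the double series. -/
noncomputable def Fterm (q x : ℝ) {r : ℕ} (t : ℂ) (p : (Fin r → ℕ) × ℕ) : ℂ :=
  ((Acoef q x p.1 : ℝ) : ℂ) * (((Ccoef q x p.1 : ℝ) : ℂ) * t) ^ p.2 / ((p.2)! : ℂ)

/-- Taylor coefficients of the generating function. -/
noncomputable def dcoef (q x : ℝ) (r : ℕ) (k : ℕ) : ℂ :=
  if h : r ≤ k then (-1 : ℂ) ^ r * bcoef q x r (k - r) / ((k - r)! : ℂ) else 0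

variable {q x : ℝ} {r : ℕ} (hq0 : 0 < q) (hq1 : q < 1) (hx : 0 < x)

include hq0 in
lemma Acoef_pos (m : Fin r → ℕ) : 0 < Acoef q x m :=
  Real.rpow_pos_of_pos hq0 _

include hq0 hq1 hx in
lemma Ccoef_nonneg (m : Fin r → ℕ) : 0 ≤ Ccoef q x m := by
  have h1 : q ^ (x + ((∑ i, m i : ℕ) : ℝ)) ≤ 1 :=
    Real.rpow_le_one hq0.le hq1.le (by positivity)
  have h2 : (0:ℝ) < 1 - q := by linarith
  exact div_nonneg (by linarith) h2.le

include hq0 hq1 hx in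
lemma Ccoef_le (m : Fin r → ℕ) : Ccoef q x m ≤ (1 - q)⁻¹ := by
  have h1 : 0 < q ^ (x + ((∑ i, m i : ℕ) : ℝ)) := Real.rpow_pos_of_pos hq0 _
  have h2 : (0:ℝ) < 1 - q := by linarith
  rw [inv_eq_one_div]
  unfold Ccoef qNum
  gcongr
  linarith

include hq0 hq1 in
lemma summable_Acoef : Summable (fun m : Fin r → ℕ ↦ Acoef q x m) := by
  have h0 : (fun m : Fin r → ℕ ↦ Acoef q x m)
      = fun m : Fin r → ℕ ↦ q ^ x * q ^ (∑ i, m i) := by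
    funext m
    rw [Acoef, Real.rpow_add hq0, Real.rpow_natCast]
  rw [h0]
  exact (summable_pow_sum_s5 hq0.le hq1 r).mul_left _

include hq0 hq1 hx in
lemma hasSum_dcoef (t : ℂ) :
    HasSum (fun k : ℕ ↦ dcoef q x r k * t ^ k) (multipleQBernoulliGen q r x t) := by
  classical
  have hBpos : (0:ℝ) < (1 - q)⁻¹ := by
    have : (0:ℝ) < 1 - q := by linarith
    positivity
  have hBt : Summable (fun j : ℕ ↦ ((1 - q)⁻¹ * ‖t‖) ^ j / (j ! : ℝ)) :=
    Real.summable_pow_div_factorial _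
  have hnormF : ∀ p : (Fin r → ℕ) × ℕ,
      ‖Fterm q x t p‖ = Acoef q x p.1 * (Ccoef q x p.1 * ‖t‖) ^ p.2 / ((p.2)! : ℝ) := by
    intro p
    rw [Fterm]
    simp only [norm_div, norm_mul, norm_pow, norm_mul, Complex.norm_real,
      Complex.norm_natCast, Real.norm_eq_abs]
    rw [abs_of_pos (Acoef_pos hq0 p.1), abs_of_nonneg (Ccoef_nonneg hq0 hq1 hx p.1)]
  have hFsum : Summable (Fterm q x t (r := r)) := by
    apply Summable.of_norm_bounded
      (g := fun p : (Fin r → ℕ) × ℕ ↦ Acoef q x p.1 * (((1 - q)⁻¹ * ‖t‖) ^ p.2 / ((p.2)! : ℝ)))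
    · exact Summable.mul_of_nonneg (g := fun j : ℕ ↦ ((1 - q)⁻¹ * ‖t‖) ^ j / (j ! : ℝ))
        (summable_Acoef hq0 hq1) hBt (fun m => (Acoef_pos hq0 m).le)
        (fun j => div_nonneg (pow_nonneg (mul_nonneg hBpos.le (norm_nonneg t)) j)
          (Nat.cast_nonneg _))
    · intro p
      rw [hnormF p, mul_div_assoc]
      have hCt : Ccoef q x p.1 * ‖t‖ ≤ (1 - q)⁻¹ * ‖t‖ :=
        mul_le_mul_of_nonneg_right (Ccoef_le hq0 hq1 hx p.1) (norm_nonneg t)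
      have hCt0 : 0 ≤ Ccoef q x p.1 * ‖t‖ :=
        mul_nonneg (Ccoef_nonneg hq0 hq1 hx p.1) (norm_nonneg t)
      have h3 : (Ccoef q x p.1 * ‖t‖) ^ p.2 / ((p.2)! : ℝ)
          ≤ ((1 - q)⁻¹ * ‖t‖) ^ p.2 / ((p.2)! : ℝ) := by
        gcongr
      exact mul_le_mul_of_nonneg_left h3 (Acoef_pos hq0 p.1).le
  -- the inner sum identity
  have key : (∑' m : Fin r → ℕ, ((Acoef q x m : ℝ) : ℂ) *
        Complex.exp (((Ccoef q x m : ℝ) : ℂ) * t))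
      = ∑' j : ℕ, bcoef q x r j * (t ^ j / (j ! : ℂ)) := by
    have e1 : ∀ m : Fin r → ℕ, ((Acoef q x m : ℝ) : ℂ) *
        Complex.exp (((Ccoef q x m : ℝ) : ℂ) * t) = ∑' j : ℕ, Fterm q x t (m, j) := by
      intro m
      rw [Complex.exp_eq_exp_ℂ, NormedSpace.exp_eq_tsum_div]
      rw [← tsum_mul_left]
      exact tsum_congr fun j => by rw [Fterm, mul_div_assoc]
    have e2 : ∀ j : ℕ, (∑' m : Fin r → ℕ, Fterm q x t (m, j))
        = bcoef q x r j * (t ^ j / (j ! : ℂ)) := by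
      intro j
      have h4 : ∀ m : Fin r → ℕ, Fterm q x t (m, j)
          = (((Acoef q x m : ℝ) : ℂ) * ((Ccoef q x m : ℝ) : ℂ) ^ j) * (t ^ j / (j ! : ℂ)) := by
        intro m
        rw [Fterm]
        ring
      rw [tsum_congr h4, tsum_mul_right, bcoef]
    calc (∑' m : Fin r → ℕ, ((Acoef q x m : ℝ) : ℂ) *
          Complex.exp (((Ccoef q x m : ℝ) : ℂ) * t))
        = ∑' (m : Fin r → ℕ) (j : ℕ), Fterm q x t (m, j) := tsum_congr e1
      _ = ∑' (j : ℕ) (m : Fin r → ℕ), Fterm q x t (m, j) :=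
          (Summable.tsum_comm (f := fun (m : Fin r → ℕ) (j : ℕ) => Fterm q x t (m, j)) hFsum).symm
      _ = ∑' j : ℕ, bcoef q x r j * (t ^ j / (j ! : ℂ)) := tsum_congr e2
  have hsum2 : Summable (fun j : ℕ ↦ bcoef q x r j * (t ^ j / (j ! : ℂ))) := by
    have h1 := (hFsum.prod_symm).prod
    apply h1.congr
    intro j
    have h4 : ∀ m : Fin r → ℕ, Fterm q x t (m, j)
        = (((Acoef q x m : ℝ) : ℂ) * ((Ccoef q x m : ℝ) : ℂ) ^ j) * (t ^ j / (j ! : ℂ)) := by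
      intro m
      rw [Fterm]; ring
    show (∑' m : Fin r → ℕ, Fterm q x t ((j, m).swap)) = _
    simp only [Prod.swap]
    rw [tsum_congr h4, tsum_mul_right, bcoef]
  have hG : multipleQBernoulliGen q r x t
      = (-t) ^ r * ∑' j : ℕ, bcoef q x r j * (t ^ j / (j ! : ℂ)) := by
    rw [multipleQBernoulliGen, ← key]
    rfl
  have hs3 : HasSum (fun j : ℕ ↦ (-t) ^ r * (bcoef q x r j * (t ^ j / (j ! : ℂ))))
      (multipleQBernoulliGen q r x t) := by
    rw [hG]
    exact hsum2.hasSum.mul_left _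
  have hinj : Function.Injective (fun j : ℕ ↦ j + r) := fun a b h => by simpa using h
  refine (Function.Injective.hasSum_iff hinj ?_).mp ?_
  · intro k hk
    have hrk : ¬ r ≤ k := by
      intro hle
      exact hk ⟨k - r, by simp [Nat.sub_add_cancel hle]⟩
    rw [dcoef, dif_neg hrk, zero_mul]
  · apply hs3.congr_fun
    intro j
    show dcoef q x r (j + r) * t ^ (j + r) = _
    rw [dcoef, dif_pos (by omega : r ≤ j + r), Nat.add_sub_cancel, pow_add, neg_pow]
    ring

include hq0 hq1 hx in
lemma norm_bcoef_le (j : ℕ) :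
    ‖bcoef q x r j‖ ≤ (∑' m : Fin r → ℕ, Acoef q x m) * ((1 - q)⁻¹) ^ j := by
  set B : ℝ := (1 - q)⁻¹ with hB
  have hsA := summable_Acoef (q := q) (x := x) (r := r) hq0 hq1
  have hpt : ∀ m : Fin r → ℕ,
      ‖((Acoef q x m : ℝ) : ℂ) * ((Ccoef q x m : ℝ) : ℂ) ^ j‖ = Acoef q x m * Ccoef q x m ^ j := by
    intro m
    rw [norm_mul, norm_pow, Complex.norm_real, Complex.norm_real, Real.norm_eq_abs,
      Real.norm_eq_abs, abs_of_pos (Acoef_pos hq0 m), abs_of_nonneg (Ccoef_nonneg hq0 hq1 hx m)]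
  have hle : ∀ m : Fin r → ℕ, Acoef q x m * Ccoef q x m ^ j ≤ Acoef q x m * B ^ j := by
    intro m
    apply mul_le_mul_of_nonneg_left _ (Acoef_pos hq0 m).le
    exact pow_le_pow_left₀ (Ccoef_nonneg hq0 hq1 hx m) (Ccoef_le hq0 hq1 hx m) j
  have hsum1 : Summable (fun m : Fin r → ℕ ↦ Acoef q x m * Ccoef q x m ^ j) := by
    apply Summable.of_nonneg_of_le
      (fun m => mul_nonneg (Acoef_pos hq0 m).le (pow_nonneg (Ccoef_nonneg hq0 hq1 hx m) j))
      hle (hsA.mul_right (B ^ j))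
  have hsnorm : Summable (fun m : Fin r → ℕ ↦
      ‖((Acoef q x m : ℝ) : ℂ) * ((Ccoef q x m : ℝ) : ℂ) ^ j‖) := by
    exact hsum1.congr fun m => (hpt m).symm
  calc ‖bcoef q x r j‖
      ≤ ∑' m : Fin r → ℕ, ‖((Acoef q x m : ℝ) : ℂ) * ((Ccoef q x m : ℝ) : ℂ) ^ j‖ :=
        norm_tsum_le_tsum_norm hsnorm
    _ = ∑' m : Fin r → ℕ, Acoef q x m * Ccoef q x m ^ j := tsum_congr hpt
    _ ≤ ∑' m : Fin r → ℕ, Acoef q x m * B ^ j :=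
        Summable.tsum_le_tsum hle hsum1 (hsA.mul_right _)
    _ = (∑' m : Fin r → ℕ, Acoef q x m) * B ^ j := tsum_mul_right

include hq0 hq1 hx in
lemma radius_dcoef_top :
    (FormalMultilinearSeries.ofScalars ℂ (dcoef q x r)).radius = ⊤ := by
  apply FormalMultilinearSeries.radius_eq_top_of_summable_norm
  intro ρ
  have hBpos : (0:ℝ) < (1 - q)⁻¹ := by
    have : (0:ℝ) < 1 - q := by linarith
    positivity
  have hAs0 : (0:ℝ) ≤ ∑' m : Fin r → ℕ, Acoef q x m :=
    tsum_nonneg fun m => (Acoef_pos hq0 m).le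
  have hinj : Function.Injective (fun j : ℕ ↦ j + r) := fun a b h => by simpa using h
  rw [← Function.Injective.summable_iff hinj ?_]
  · show Summable (fun j : ℕ ↦
      ‖FormalMultilinearSeries.ofScalars ℂ (dcoef q x r) (j + r)‖ * (ρ : ℝ) ^ (j + r))
    apply Summable.of_nonneg_of_le
      (f := fun j : ℕ ↦ ((∑' m : Fin r → ℕ, Acoef q x m) * (ρ : ℝ) ^ r) *
        (((1 - q)⁻¹ * ρ) ^ j / (j ! : ℝ)))
      (fun j => by positivity)
    · intro j
      rw [FormalMultilinearSeries.ofScalars_norm]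
      have hd : dcoef q x r (j + r) = (-1 : ℂ) ^ r * bcoef q x r j / ((j)! : ℂ) := by
        rw [dcoef, dif_pos (by omega : r ≤ j + r), Nat.add_sub_cancel]
      have hnorm : ‖dcoef q x r (j + r)‖ = ‖bcoef q x r j‖ / (j ! : ℝ) := by
        rw [hd, norm_div, norm_mul, norm_pow, norm_neg, norm_one, one_pow, one_mul,
          Complex.norm_natCast]
      rw [hnorm]
      have hb := norm_bcoef_le (r := r) hq0 hq1 hx j
      calc ‖bcoef q x r j‖ / (j ! : ℝ) * (ρ : ℝ) ^ (j + r)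
          ≤ (∑' m : Fin r → ℕ, Acoef q x m) * ((1 - q)⁻¹) ^ j / (j ! : ℝ) * (ρ : ℝ) ^ (j + r) := by
            have hnum : ‖bcoef q x r j‖ / (j ! : ℝ)
                ≤ (∑' m : Fin r → ℕ, Acoef q x m) * ((1 - q)⁻¹) ^ j / (j ! : ℝ) := by
              gcongr
            exact mul_le_mul_of_nonneg_right hnum (by positivity)
        _ = ((∑' m : Fin r → ℕ, Acoef q x m) * (ρ : ℝ) ^ r) *
              (((1 - q)⁻¹ * ρ) ^ j / (j ! : ℝ)) := by
            rw [pow_add, mul_pow]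
            ring
    · exact ((Real.summable_pow_div_factorial _).mul_left _)
  · intro k hk
    have hrk : ¬ r ≤ k := by
      intro hle
      exact hk ⟨k - r, by simp [Nat.sub_add_cancel hle]⟩
    rw [FormalMultilinearSeries.ofScalars_norm, dcoef, dif_neg hrk, norm_zero, zero_mul]

end Aux

/-- For `0 < q < 1`, `r ≥ 1`, real `x > 0` and `n ≥ 0`, the multiple `q`-Hurwitz zeta
series at `s = -n` equals `(-1)^r n!/(n+r)! B^{(r)}_{n+r,q}(x)`. -/
theorem multiple_q_hurwitz_zeta_neg_int (q : ℝ) (hq0 : 0 < q) (hq1 : q < 1)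
    (r : ℕ) (hr : 1 ≤ r) (x : ℝ) (hx : 0 < x) (n : ℕ) :
    (∑' m : Fin r → ℕ,
      ((q ^ (x + ((∑ i, m i : ℕ) : ℝ)) : ℝ) : ℂ) *
        ((qNum q (x + ((∑ i, m i : ℕ) : ℝ)) : ℝ) : ℂ) ^ n) =
    (-1 : ℂ) ^ r * ((n.factorial : ℂ) / ((n + r).factorial : ℂ)) *
      multipleQBernoulli q r (n + r) x := by
  have hball : HasFPowerSeriesOnBall (multipleQBernoulliGen q r x)
      (FormalMultilinearSeries.ofScalars ℂ (dcoef q x r)) 0 ⊤ := by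
    refine ⟨?_, ?_, ?_⟩
    · rw [radius_dcoef_top hq0 hq1 hx]
    · exact ENNReal.zero_lt_top
    · intro y _
      rw [zero_add]
      apply (hasSum_dcoef hq0 hq1 hx y).congr_fun
      intro k
      rw [FormalMultilinearSeries.ofScalars_apply_eq, smul_eq_mul]
  have hfac := hball.factorial_smul 1 (n + r)
  rw [FormalMultilinearSeries.ofScalars_apply_eq] at hfac
  have hB : multipleQBernoulli q r (n + r) x
      = ((n + r).factorial : ℂ) * ((-1 : ℂ) ^ r * bcoef q x r n / (n.factorial : ℂ)) := by
    have h1 : multipleQBernoulli q r (n + r) x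
        = iteratedFDeriv ℂ (n + r) (multipleQBernoulliGen q r x) 0 (fun _ ↦ 1) := rfl
    rw [h1, ← hfac, one_pow, smul_eq_mul, mul_one, nsmul_eq_mul]
    congr 1
    rw [dcoef, dif_pos (by omega : r ≤ n + r), Nat.add_sub_cancel]
  have hLHS : (∑' m : Fin r → ℕ,
      ((q ^ (x + ((∑ i, m i : ℕ) : ℝ)) : ℝ) : ℂ) *
        ((qNum q (x + ((∑ i, m i : ℕ) : ℝ)) : ℝ) : ℂ) ^ n) = bcoef q x r n := rfl
  rw [hLHS, hB]
  have h1 : (n.factorial : ℂ) ≠ 0 := Nat.cast_ne_zero.mpr n.factorial_ne_zero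
  have h2 : ((n + r).factorial : ℂ) ≠ 0 := Nat.cast_ne_zero.mpr (n + r).factorial_ne_zero
  have hneg : ((-1 : ℂ) ^ (r * 2)) = 1 := by
    rw [pow_mul', neg_one_sq, one_pow]
  field_simp
  linear_combination (-bcoef q x r n) * hneg
end

section
/- Let 0<q<1 be a real number, let r≥1 and F≥1 be integers, let a₁,...,a_r be integers with 0 < a_i ≤ F, and let n≥0 be an integer. Then H_{r,q}(−n; a₁,...,a_r | F) = [F]_q^{n} · (−1)^r · (n!/(n+r)!) · B^{(r)}_{n+r,q^F}((a₁+⋯+a_r)/F). -/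
open Complex
open scoped ContDiff

section aux

lemma myIteratedDeriv_add {f g : ℂ → ℂ} {m : ℕ} (hf : ContDiff ℂ ∞ f) (hg : ContDiff ℂ ∞ g)
    (x : ℂ) :
    iteratedDeriv m (fun t => f t + g t) x = iteratedDeriv m f x + iteratedDeriv m g x := by
  have h1 : ContDiffOn ℂ m f Set.univ := (hf.of_le (by exact_mod_cast le_top)).contDiffOn
  have h2 : ContDiffOn ℂ m g Set.univ := (hg.of_le (by exact_mod_cast le_top)).contDiffOn
  have := iteratedDerivWithin_add (Set.mem_univ x) uniqueDiffOn_univ (h1 x (Set.mem_univ x)) (h2 x (Set.mem_univ x))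
  simpa [iteratedDerivWithin_univ, Pi.add_def] using this

lemma myIteratedDeriv_const_mul (c : ℂ) {f : ℂ → ℂ} {m : ℕ} (hf : ContDiff ℂ ∞ f) (x : ℂ) :
    iteratedDeriv m (fun t => c * f t) x = c * iteratedDeriv m f x := by
  have h1 : ContDiffOn ℂ m f Set.univ := (hf.of_le (by exact_mod_cast le_top)).contDiffOn
  have := iteratedDerivWithin_const_mul (Set.mem_univ x) uniqueDiffOn_univ c (h1 x (Set.mem_univ x))
  simpa [iteratedDerivWithin_univ] using this

lemma myL1 (m : ℕ) : ∀ {f : ℂ → ℂ}, ContDiff ℂ ∞ f →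
    iteratedDeriv (m + 1) (fun t => t * f t) 0 = (m + 1 : ℂ) * iteratedDeriv m f 0 := by
  induction m with
  | zero =>
    intro f hf
    rw [iteratedDeriv_one]
    have h : HasDerivAt (fun t : ℂ => t * f t) (1 * f 0 + 0 * deriv f 0) 0 :=
      (hasDerivAt_id 0).mul ((hf.differentiable (by simp) 0).hasDerivAt)
    rw [h.deriv]
    simp
  | succ m ih =>
    intro f hf
    have hdiff : Differentiable ℂ f := hf.differentiable (by simp)
    have hdf : ContDiff ℂ ∞ (deriv f) := (contDiff_infty_iff_deriv.mp hf).2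
    rw [iteratedDeriv_succ']
    have hd : deriv (fun t : ℂ => t * f t) = fun t => f t + t * deriv f t := by
      funext t
      have h : HasDerivAt (fun t : ℂ => t * f t) (1 * f t + t * deriv f t) t :=
        (hasDerivAt_id t).mul (hdiff t).hasDerivAt
      rw [h.deriv]
      ring
    rw [hd, myIteratedDeriv_add (g := fun t => t * deriv f t) hf (contDiff_id.mul hdf) 0, ih hdf, ← iteratedDeriv_succ']
    push_cast
    ring

lemma myL2 (n : ℕ) : ∀ (r : ℕ), ∀ {f : ℂ → ℂ}, ContDiff ℂ ∞ f →
    (n.factorial : ℂ) * iteratedDeriv (n + r) (fun t => t ^ r * f t) 0 =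
      ((n + r).factorial : ℂ) * iteratedDeriv n f 0 := by
  intro r
  induction r with
  | zero => intro f hf; simp
  | succ r ih =>
    intro f hf
    have hsm : ContDiff ℂ ∞ (fun t : ℂ => t ^ r * f t) := (contDiff_id.pow r).mul hf
    have h1 : (fun t : ℂ => t ^ (r + 1) * f t) = fun t => t * (t ^ r * f t) := by
      funext t; ring
    rw [h1, show n + (r + 1) = (n + r) + 1 from rfl, myL1 (n + r) hsm]
    have hfac : (((n + r + 1).factorial : ℕ) : ℂ) =
        ((n + r : ℕ) + 1 : ℂ) * ((n + r).factorial : ℂ) := by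
      rw [Nat.factorial_succ]
      push_cast
      ring
    rw [hfac]
    calc (n.factorial : ℂ) * (((n + r : ℕ) + 1 : ℂ) * iteratedDeriv (n + r) (fun t => t ^ r * f t) 0)
        = ((n + r : ℕ) + 1 : ℂ) * ((n.factorial : ℂ) * iteratedDeriv (n + r) (fun t => t ^ r * f t) 0) := by ring
      _ = ((n + r : ℕ) + 1 : ℂ) * (((n + r).factorial : ℂ) * iteratedDeriv n f 0) := by rw [ih hf]
      _ = ((n + r : ℕ) + 1 : ℂ) * ((n + r).factorial : ℂ) * iteratedDeriv n f 0 := by ring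

end aux

noncomputable def sfun {ι : Type*} (c lam : ι → ℝ) (k : ℕ) (t : ℂ) : ℂ :=
  ∑' ν : ι, (c ν : ℂ) * (lam ν : ℂ) ^ k * Complex.exp ((lam ν : ℂ) * t)

section series

variable {ι : Type*} {c lam : ι → ℝ} {M : ℝ}
variable (hc : Summable c) (hc0 : ∀ ν, 0 ≤ c ν) (h0 : ∀ ν, 0 ≤ lam ν) (hM : ∀ ν, lam ν ≤ M)

include hc0 h0 hM in
lemma norm_sterm_le (ν : ι) (k : ℕ) (t : ℂ) {R : ℝ} (hR : 0 ≤ R) (ht : ‖t‖ ≤ R) :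
    ‖(c ν : ℂ) * (lam ν : ℂ) ^ k * Complex.exp ((lam ν : ℂ) * t)‖ ≤
      c ν * (M ^ k * Real.exp (M * R)) := by
  have hMnn : 0 ≤ M := (h0 ν).trans (hM ν)
  have h1 : ‖Complex.exp ((lam ν : ℂ) * t)‖ ≤ Real.exp (M * R) := by
    rw [Complex.norm_exp]
    apply Real.exp_le_exp.2
    have : ((lam ν : ℂ) * t).re = lam ν * t.re := by simp [Complex.mul_re]
    rw [this]
    have h2 : t.re ≤ R := le_trans (le_trans (le_abs_self _) (Complex.abs_re_le_norm t)) ht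
    calc lam ν * t.re ≤ lam ν * R := by
          apply mul_le_mul_of_nonneg_left _ (h0 ν)
          exact h2
      _ ≤ M * R := mul_le_mul_of_nonneg_right (hM ν) hR
  calc ‖(c ν : ℂ) * (lam ν : ℂ) ^ k * Complex.exp ((lam ν : ℂ) * t)‖
      = c ν * lam ν ^ k * ‖Complex.exp ((lam ν : ℂ) * t)‖ := by
        rw [norm_mul, norm_mul, norm_pow, Complex.norm_real, Complex.norm_real,
          Real.norm_eq_abs, Real.norm_eq_abs, _root_.abs_of_nonneg (hc0 ν),
          _root_.abs_of_nonneg (h0 ν)]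
    _ ≤ c ν * M ^ k * Real.exp (M * R) := by
        apply mul_le_mul _ h1 (norm_nonneg _) (mul_nonneg (hc0 ν) (pow_nonneg hMnn k))
        exact mul_le_mul_of_nonneg_left (pow_le_pow_left₀ (h0 ν) (hM ν) k) (hc0 ν)
    _ = c ν * (M ^ k * Real.exp (M * R)) := by ring

include hc hc0 h0 hM in
lemma summable_sterm (k : ℕ) (t : ℂ) :
    Summable (fun ν => (c ν : ℂ) * (lam ν : ℂ) ^ k * Complex.exp ((lam ν : ℂ) * t)) := by
  apply Summable.of_norm_bounded (g := fun ν => c ν * (M ^ k * Real.exp (M * ‖t‖)))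
    (hc.mul_right _)
  intro ν
  exact norm_sterm_le hc0 h0 hM ν k t (norm_nonneg t) le_rfl

include hc hc0 h0 hM in
lemma hasDerivAt_sfun (k : ℕ) (t : ℂ) :
    HasDerivAt (sfun c lam k) (sfun c lam (k + 1) t) t := by
  set R : ℝ := ‖t‖ + 1 with hR
  have hR0 : 0 ≤ R := by positivity
  apply hasDerivAt_tsum_of_isPreconnected
    (u := fun ν => c ν * (M ^ (k + 1) * Real.exp (M * R)))
    (hc.mul_right _) Metric.isOpen_ball (convex_ball (0 : ℂ) R).isPreconnected
    (g := fun ν y => (c ν : ℂ) * (lam ν : ℂ) ^ k * Complex.exp ((lam ν : ℂ) * y))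
    (g' := fun ν y => (c ν : ℂ) * (lam ν : ℂ) ^ (k + 1) * Complex.exp ((lam ν : ℂ) * y))
    (y₀ := t)
  · intro ν y _
    have h := ((((hasDerivAt_id y).const_mul ((lam ν : ℂ))).cexp).const_mul
      ((c ν : ℂ) * (lam ν : ℂ) ^ k))
    refine h.congr_deriv ?_
    simp only [id_eq]
    ring
  · intro ν y hy
    have hyR : ‖y‖ ≤ R := by
      rw [Metric.mem_ball, dist_zero_right] at hy
      exact hy.le
    exact norm_sterm_le hc0 h0 hM ν (k + 1) y hR0 hyR
  · simp [Metric.mem_ball, hR]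
  · exact summable_sterm hc hc0 h0 hM k t
  · simp [Metric.mem_ball, hR]

include hc hc0 h0 hM in
lemma contDiff_sfun (k : ℕ) : ContDiff ℂ ∞ (sfun c lam k) := by
  have hd : Differentiable ℂ (sfun c lam k) :=
    fun t => (hasDerivAt_sfun hc hc0 h0 hM k t).differentiableAt
  exact hd.contDiff

include hc hc0 h0 hM in
lemma deriv_sfun (k : ℕ) : deriv (sfun c lam k) = sfun c lam (k + 1) :=
  funext fun t => (hasDerivAt_sfun hc hc0 h0 hM k t).deriv

include hc hc0 h0 hM in
lemma iteratedDeriv_sfun (m k : ℕ) (t : ℂ) :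
    iteratedDeriv m (sfun c lam k) t = sfun c lam (k + m) t := by
  induction m generalizing k with
  | zero => simp
  | succ m ih =>
    rw [iteratedDeriv_succ', deriv_sfun hc hc0 h0 hM k, ih (k + 1)]
    ring_nf

end series

lemma summable_pow_sum_s7 {Q : ℝ} (hQ0 : 0 ≤ Q) (hQ1 : Q < 1) (r : ℕ) :
    Summable (fun ν : Fin r → ℕ => Q ^ (∑ i, ν i)) := by
  induction r with
  | zero => exact Summable.of_finite
  | succ r ih =>
    rw [← (Fin.consEquiv (fun _ : Fin (r + 1) => ℕ)).summable_iff]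
    have he : ((fun ν : Fin (r + 1) → ℕ => Q ^ (∑ i, ν i)) ∘ (Fin.consEquiv fun _ => ℕ)) =
        fun p : ℕ × (Fin r → ℕ) => Q ^ p.1 * Q ^ (∑ i, p.2 i) := by
      funext p
      simp [Fin.consEquiv, Fin.sum_cons, pow_add]
    rw [he]
    exact Summable.mul_of_nonneg (f := fun n : ℕ => Q ^ n)
      (g := fun ν : Fin r → ℕ => Q ^ (∑ i, ν i))
      (summable_geometric_of_lt_one hQ0 hQ1) ih
      (fun _ => pow_nonneg hQ0 _) (fun _ => pow_nonneg hQ0 _)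

/-- For `0 < q < 1`, integers `r, F ≥ 1`, integers `0 < aᵢ ≤ F` and `n ≥ 0`, the partial
multiple `q`-zeta function at `s = -n` satisfies
`H_{r,q}(-n; a₁,…,a_r | F) = [F]_q^n (-1)^r n!/(n+r)! B^{(r)}_{n+r,q^F}((a₁+⋯+a_r)/F)`. -/
theorem partial_multiple_q_zeta_neg_int (q : ℝ) (hq0 : 0 < q) (hq1 : q < 1)
    (r F : ℕ) (hr : 1 ≤ r) (hF : 1 ≤ F) (a : Fin r → ℕ)
    (ha : ∀ i, 1 ≤ a i ∧ a i ≤ F) (n : ℕ) :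
    (∑' m : {m : Fin r → ℕ+ // ∀ i, (m i : ℕ) ≡ a i [MOD F]},
      (q : ℂ) ^ (∑ i, ((m : Fin r → ℕ+) i : ℕ)) *
        ((qNum q ((∑ i, ((m : Fin r → ℕ+) i : ℕ)) : ℝ) : ℝ) : ℂ) ^ n) =
    ((qNum q (F : ℝ) : ℝ) : ℂ) ^ n * (-1 : ℂ) ^ r *
      ((n.factorial : ℂ) / ((n + r).factorial : ℂ)) *
        multipleQBernoulli (q ^ F) r (n + r) (((∑ i, a i : ℕ) : ℝ) / (F : ℝ)) := by
  classical
  have hF0 : (0:ℝ) < F := by exact_mod_cast hF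
  set S : ℕ := ∑ i, a i with hSdef
  set x : ℝ := (S : ℝ) / F with hxdef
  have hx0 : 0 ≤ x := by positivity
  have hFx : (F : ℝ) * x = (S : ℝ) := by rw [hxdef]; field_simp
  set Q : ℝ := q ^ F with hQdef
  have hQ0 : 0 < Q := pow_pos hq0 F
  have hQ1 : Q < 1 := pow_lt_one₀ hq0.le hq1 (by omega)
  have hQr : Q = q ^ (F : ℝ) := by rw [hQdef, Real.rpow_natCast]
  have hq1' : (1 : ℝ) - q ≠ 0 := by linarith
  have hQ1' : (1 : ℝ) - Q ≠ 0 := by linarith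
  set c : (Fin r → ℕ) → ℝ := fun ν => Q ^ (x + ((∑ i, ν i : ℕ) : ℝ)) with hcdef
  set lam : (Fin r → ℕ) → ℝ := fun ν => qNum Q (x + ((∑ i, ν i : ℕ) : ℝ)) with hlamdef
  set M : ℝ := 1 / (1 - Q) with hMdef
  -- basic facts about `c` and `lam`
  have hc0 : ∀ ν, 0 ≤ c ν := fun ν => (Real.rpow_pos_of_pos hQ0 _).le
  have hy0 : ∀ ν : Fin r → ℕ, (0:ℝ) ≤ x + ((∑ i, ν i : ℕ) : ℝ) := by
    intro ν; positivity
  have hQy1 : ∀ ν : Fin r → ℕ, Q ^ (x + ((∑ i, ν i : ℕ) : ℝ)) ≤ 1 := by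
    intro ν
    exact Real.rpow_le_one hQ0.le hQ1.le (hy0 ν)
  have hlam0 : ∀ ν, 0 ≤ lam ν := by
    intro ν
    apply div_nonneg _ (by linarith)
    have := hQy1 ν; linarith
  have hlamM : ∀ ν, lam ν ≤ M := by
    intro ν
    simp only [hlamdef, hMdef, qNum]
    have h1Q : (0:ℝ) < 1 - Q := by linarith
    have h2 := Real.rpow_pos_of_pos hQ0 (x + ((∑ i, ν i : ℕ) : ℝ))
    gcongr
    linarith
  have hcS : Summable c := by
    have h1 : c = fun ν : Fin r → ℕ => Q ^ x * Q ^ (∑ i, ν i) := by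
      funext ν
      simp only [hcdef]
      rw [Real.rpow_add hQ0, Real.rpow_natCast]
    rw [h1]
    exact (summable_pow_sum_s7 hQ0.le hQ1 r).mul_left _
  -- key real identities
  have hexp : ∀ ν : Fin r → ℕ, ((S + F * ∑ i, ν i : ℕ) : ℝ) = (F:ℝ) * (x + ((∑ i, ν i : ℕ) : ℝ)) := by
    intro ν
    push_cast
    rw [mul_add, hFx]
  have hcq : ∀ ν : Fin r → ℕ, c ν = q ^ (S + F * ∑ i, ν i) := by
    intro ν
    simp only [hcdef]
    rw [hQr, ← Real.rpow_natCast q (S + F * ∑ i, ν i), hexp ν, Real.rpow_mul hq0.le]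
  have hqnum : ∀ ν : Fin r → ℕ,
      qNum q ((S + F * ∑ i, ν i : ℕ) : ℝ) = qNum q (F : ℝ) * lam ν := by
    intro ν
    simp only [hlamdef, qNum]
    have hA : q ^ (((S + F * ∑ i, ν i : ℕ)) : ℝ) = Q ^ (x + ((∑ i, ν i : ℕ) : ℝ)) := by
      rw [hexp ν, Real.rpow_mul hq0.le, ← hQr]
    rw [hA, ← hQr]
    field_simp
  -- the reindexing bijection
  set g : (Fin r → ℕ) → {m : Fin r → ℕ+ // ∀ i, (m i : ℕ) ≡ a i [MOD F]} := fun ν =>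
    ⟨fun i => ⟨a i + F * ν i, by have := (ha i).1; omega⟩,
      fun i => Nat.add_mul_mod_self_left (a i) F (ν i)⟩ with hgdef
  have hbij : Function.Bijective g := by
    constructor
    · intro ν ν' h
      funext i
      have h2 : a i + F * ν i = a i + F * ν' i := congrArg (fun z => ((z.1 i : ℕ))) h
      have hF1 : 0 < F := hF
      have := Nat.eq_of_mul_eq_mul_left hF1 (by omega : F * ν i = F * ν' i)
      exact this
    · rintro ⟨m, hm⟩
      have key : ∀ i, ∃ k, (m i : ℕ) = a i + F * k := by
        intro i
        have d : (F : ℤ) ∣ (a i : ℤ) - ((m i : ℕ) : ℤ) := (hm i).dvd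
        have hmi : 0 < (m i : ℕ) := (m i).2
        have h1 : a i ≤ (m i : ℕ) := by
          by_contra hlt
          push_neg at hlt
          have h2 := Int.le_of_dvd (by push_cast; omega) d
          have h3 := (ha i).2
          have h4 : (1:ℕ) ≤ F := hF
          push_cast at h2
          omega
        obtain ⟨k, hk⟩ := (Nat.modEq_iff_dvd' h1).mp (hm i).symm
        exact ⟨k, by omega⟩
      choose k hk using key
      refine ⟨k, ?_⟩
      apply Subtype.ext
      funext i
      apply Subtype.ext
      exact (hk i).symm
  set e : (Fin r → ℕ) ≃ {m : Fin r → ℕ+ // ∀ i, (m i : ℕ) ≡ a i [MOD F]} :=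
    Equiv.ofBijective g hbij with hedef
  rw [← e.tsum_eq]
  -- rewrite each term of the sum
  have hsum_m : ∀ ν : Fin r → ℕ, (∑ i, (((g ν : {m : Fin r → ℕ+ // ∀ i, (m i : ℕ) ≡ a i [MOD F]}) :
      Fin r → ℕ+) i : ℕ)) = S + F * ∑ i, ν i := by
    intro ν
    show (∑ i, (a i + F * ν i)) = S + F * ∑ i, ν i
    rw [Finset.sum_add_distrib, ← Finset.mul_sum, hSdef]
  have hterm : ∀ ν : Fin r → ℕ,
      (q : ℂ) ^ (∑ i, (((e ν : {m : Fin r → ℕ+ // ∀ i, (m i : ℕ) ≡ a i [MOD F]}) :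
          Fin r → ℕ+) i : ℕ)) *
        ((qNum q ((∑ i, (((e ν : {m : Fin r → ℕ+ // ∀ i, (m i : ℕ) ≡ a i [MOD F]}) :
          Fin r → ℕ+) i : ℕ)) : ℝ) : ℝ) : ℂ) ^ n =
      ((qNum q (F : ℝ) : ℝ) : ℂ) ^ n * ((c ν : ℂ) * (lam ν : ℂ) ^ n) := by
    intro ν
    have he1 : e ν = g ν := by rw [hedef]; rfl
    have h2 : (∑ i, ((((g ν : {m : Fin r → ℕ+ // ∀ i, (m i : ℕ) ≡ a i [MOD F]}) :
        Fin r → ℕ+) i : ℕ) : ℝ)) = ((S + F * ∑ i, ν i : ℕ) : ℝ) := by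
      rw [← Nat.cast_sum, hsum_m ν]
    rw [he1, hsum_m ν, h2, ← Complex.ofReal_pow, ← hcq ν, hqnum ν, Complex.ofReal_mul, mul_pow]
    ring
  rw [tsum_congr hterm, tsum_mul_left]
  -- compute the Bernoulli side
  have hGen : multipleQBernoulliGen Q r x = fun t => (-1:ℂ)^r * (t^r * sfun c lam 0 t) := by
    funext t
    rw [multipleQBernoulliGen, neg_pow, mul_assoc]
    congr 2
    simp only [sfun, hcdef, hlamdef, pow_zero, mul_one]
  have hsm0 : ContDiff ℂ ∞ (sfun c lam 0) := contDiff_sfun hcS hc0 hlam0 hlamM 0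
  have hsm : ContDiff ℂ ∞ (fun t : ℂ => t ^ r * sfun c lam 0 t) :=
    (contDiff_id.pow r).mul hsm0
  have hB0 : multipleQBernoulli Q r (n + r) x =
      (-1:ℂ)^r * iteratedDeriv (n + r) (fun t => t ^ r * sfun c lam 0 t) 0 := by
    rw [multipleQBernoulli, hGen, myIteratedDeriv_const_mul _ hsm]
  have hDn : iteratedDeriv n (sfun c lam 0) 0 = sfun c lam n 0 := by
    simpa using iteratedDeriv_sfun hcS hc0 hlam0 hlamM n 0 0
  have hT : sfun c lam n 0 = ∑' ν, (c ν : ℂ) * (lam ν : ℂ) ^ n := by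
    simp only [sfun, mul_zero, Complex.exp_zero, mul_one]
  have hL2 := myL2 n r (f := sfun c lam 0) hsm0
  rw [hDn, hT] at hL2
  -- final algebra
  set T : ℂ := ∑' ν, (c ν : ℂ) * (lam ν : ℂ) ^ n with hTdef
  set K : ℂ := ((qNum q (F : ℝ) : ℝ) : ℂ) ^ n with hKdef
  set D : ℂ := iteratedDeriv (n + r) (fun t => t ^ r * sfun c lam 0 t) 0 with hDdef
  have hneg : ((-1:ℂ)^r) * ((-1:ℂ)^r) = 1 := by
    rw [← pow_add]
    exact Even.neg_one_pow ⟨r, rfl⟩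
  have hfac2 : ((n + r).factorial : ℂ) ≠ 0 := by
    exact_mod_cast Nat.factorial_ne_zero (n + r)
  rw [hB0]
  calc K * T
      = (((-1:ℂ)^r) * ((-1:ℂ)^r)) * (K * ((n.factorial : ℂ) /
          ((n + r).factorial : ℂ)) * (((n + r).factorial : ℂ) * T) / (n.factorial : ℂ)) := by
        rw [hneg]
        have hfac1 : (n.factorial : ℂ) ≠ 0 := by
          exact_mod_cast Nat.factorial_ne_zero n
        field_simp
    _ = (((-1:ℂ)^r) * ((-1:ℂ)^r)) * (K * ((n.factorial : ℂ) /
          ((n + r).factorial : ℂ)) * ((n.factorial : ℂ) * D) / (n.factorial : ℂ)) := by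
        rw [hL2]
    _ = K * (-1:ℂ)^r * ((n.factorial : ℂ) / ((n + r).factorial : ℂ)) * ((-1:ℂ)^r * D) := by
        have hfac1 : (n.factorial : ℂ) ≠ 0 := by
          exact_mod_cast Nat.factorial_ne_zero n
        field_simp
end

section
/- Let 0<q<1 be a real number, let f≥1 be an integer, let χ be a nontrivial Dirichlet character modulo f with values in ℂ, and let n≥0 be an integer. Then β_{n,χ,q} = [f]_q^{n−1} · Σ_{a=1}^{f} χ(a) · β_{n,q^f}(a/f). -/
open Complex Finset

lemma hasDerivAt_expSeries (A B : ℕ → ℝ) (hA : Summable A) (hA0 : ∀ m, 0 ≤ A m)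
    (C : ℝ) (hB0 : ∀ m, 0 ≤ B m) (hBC : ∀ m, B m ≤ C) (k : ℕ) (t₀ : ℂ) :
    HasDerivAt (fun t : ℂ => ∑' m, ((A m * B m ^ k : ℝ) : ℂ) * Complex.exp ((B m : ℂ) * t))
      (∑' m, ((A m * B m ^ (k + 1) : ℝ) : ℂ) * Complex.exp ((B m : ℂ) * t₀)) t₀ := by
  have hC : 0 ≤ C := le_trans (hB0 0) (hBC 0)
  set R : ℝ := ‖t₀‖ + 1 with hR
  have hR0 : 0 < R := by positivity
  have hmem : t₀ ∈ Metric.ball (0 : ℂ) R := by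
    simp only [Metric.mem_ball, dist_zero_right, hR]
    linarith
  have h0mem : (0 : ℂ) ∈ Metric.ball (0 : ℂ) R := Metric.mem_ball_self hR0
  refine hasDerivAt_tsum_of_isPreconnected
    (g := fun m t => ((A m * B m ^ k : ℝ) : ℂ) * Complex.exp ((B m : ℂ) * t))
    (g' := fun m y => ((A m * B m ^ (k + 1) : ℝ) : ℂ) * Complex.exp ((B m : ℂ) * y))
    (u := fun m => A m * (C ^ (k + 1) * Real.exp (C * R)))
    (hA.mul_right _) Metric.isOpen_ball ((convex_ball (0 : ℂ) R).isPreconnected)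
    (fun m y _ => ?_) (fun m y hy => ?_) h0mem ?_ hmem
  · have h := (((hasDerivAt_id y).const_mul (B m : ℂ)).cexp).const_mul
      ((A m * B m ^ k : ℝ) : ℂ)
    simp only [id_eq] at h
    convert h using 1
    · rfl
    push_cast
    ring
  · have hnorm : ‖Complex.exp ((B m : ℂ) * y)‖ = Real.exp (B m * y.re) := by
      rw [Complex.norm_exp]
      congr 1
      simp [Complex.mul_re]
    have hyR : ‖y‖ < R := by simpa [Metric.mem_ball, dist_zero_right] using hy
    rw [norm_mul, hnorm, Complex.norm_real, Real.norm_eq_abs,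
      _root_.abs_of_nonneg (mul_nonneg (hA0 m) (pow_nonneg (hB0 m) _))]
    have h1 : B m * y.re ≤ C * R := by
      calc B m * y.re ≤ B m * R := by
            apply mul_le_mul_of_nonneg_left _ (hB0 m)
            exact le_trans (Complex.re_le_norm y) hyR.le
        _ ≤ C * R := mul_le_mul_of_nonneg_right (hBC m) hR0.le
    rw [mul_assoc]
    exact mul_le_mul_of_nonneg_left (mul_le_mul (pow_le_pow_left₀ (hB0 m) (hBC m) _)
      (Real.exp_le_exp.2 h1) (Real.exp_pos _).le (by positivity)) (hA0 m)
  · have hAk : Summable fun m => A m * B m ^ k := by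
      apply Summable.of_nonneg_of_le (fun m => mul_nonneg (hA0 m) (pow_nonneg (hB0 m) _))
        (fun m => mul_le_mul_of_nonneg_left (pow_le_pow_left₀ (hB0 m) (hBC m) k) (hA0 m))
        (hA.mul_right (C ^ k))
    have := Complex.summable_ofReal.2 hAk
    simpa using this

lemma contDiff_expSeries (A B : ℕ → ℝ) (hA : Summable A) (hA0 : ∀ m, 0 ≤ A m)
    (C : ℝ) (hB0 : ∀ m, 0 ≤ B m) (hBC : ∀ m, B m ≤ C) :
    ContDiff ℂ (⊤ : ℕ∞) (fun t : ℂ => ∑' m, ((A m : ℝ) : ℂ) * Complex.exp ((B m : ℂ) * t)) := by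
  have hfun : (fun t : ℂ => ∑' m, ((A m : ℝ) : ℂ) * Complex.exp ((B m : ℂ) * t))
      = fun t : ℂ => ∑' m, ((A m * B m ^ 0 : ℝ) : ℂ) * Complex.exp ((B m : ℂ) * t) := by
    simp
  rw [hfun]
  have key : ∀ j : ℕ, iteratedDeriv j
      (fun t : ℂ => ∑' m, ((A m * B m ^ 0 : ℝ) : ℂ) * Complex.exp ((B m : ℂ) * t))
      = fun t : ℂ => ∑' m, ((A m * B m ^ j : ℝ) : ℂ) * Complex.exp ((B m : ℂ) * t) := by
    intro j
    induction j with
    | zero => simp [iteratedDeriv_zero]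
    | succ j ih =>
      rw [iteratedDeriv_succ, ih]
      funext t
      exact (hasDerivAt_expSeries A B hA hA0 C hB0 hBC j t).deriv
  apply contDiff_of_differentiable_iteratedDeriv
  intro m _
  rw [key m]
  exact fun t => (hasDerivAt_expSeries A B hA hA0 C hB0 hBC m t).differentiableAt

/-- The generating function `F_q(t,x) = ((q-1)/log q) e^{t/(1-q)} -
t Σ_{m ≥ 0} q^{m+x} e^{[m+x]_q t}` of the `q`-Bernoulli polynomials `β_{n,q}(x)`. -/
noncomputable def qBernoulliPolyGen (q x : ℝ) (t : ℂ) : ℂ :=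
  (((q - 1) / Real.log q : ℝ) : ℂ) * Complex.exp (t / (1 - (q : ℂ))) -
    t * ∑' m : ℕ, ((q ^ ((m : ℝ) + x) : ℝ) : ℂ) *
      Complex.exp (((qNum q ((m : ℝ) + x) : ℝ) : ℂ) * t)

/-- The `q`-Bernoulli polynomial `β_{n,q}(x)`, the `n`-th derivative of `F_q(·,x)` at `0`. -/
noncomputable def qBernoulliPoly (q : ℝ) (n : ℕ) (x : ℝ) : ℂ :=
  iteratedDeriv n (qBernoulliPolyGen q x) 0

/-- The generating function `F_{q,χ}(t) = -t Σ_{a=1}^{f} χ(a) Σ_{m ≥ 0} q^{fm+a}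
e^{[fm+a]_q t}` of the generalized `q`-Bernoulli numbers attached to `χ`. -/
noncomputable def genQBernoulliGen (q : ℝ) (f : ℕ) (χ : DirichletCharacter ℂ f)
    (t : ℂ) : ℂ :=
  -t * ∑ a ∈ Finset.Icc 1 f, χ ((a : ℕ) : ZMod f) *
    ∑' m : ℕ, (q : ℂ) ^ (f * m + a) *
      Complex.exp (((qNum q ((f * m + a : ℕ) : ℝ) : ℝ) : ℂ) * t)

/-- The generalized `q`-Bernoulli number `β_{n,χ,q}`, the `n`-th derivative of `F_{q,χ}`
at `t = 0`. -/
noncomputable def genQBernoulli (q : ℝ) (f : ℕ) (χ : DirichletCharacter ℂ f) (n : ℕ) : ℂ :=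
  iteratedDeriv n (genQBernoulliGen q f χ) 0

lemma contDiff_qBernoulliPolyGen {Q x : ℝ} (h0 : 0 < Q) (h1 : Q < 1) (hx : 0 ≤ x) :
    ContDiff ℂ (⊤ : ℕ∞) (qBernoulliPolyGen Q x) := by
  have h1Q : (0 : ℝ) < 1 - Q := by linarith
  apply ContDiff.sub
  · exact contDiff_const.mul (Complex.contDiff_exp.comp (contDiff_id.div_const _))
  · refine contDiff_id.mul ?_
    have hA : Summable (fun m : ℕ => Q ^ ((m : ℝ) + x)) := by
      have : (fun m : ℕ => Q ^ ((m : ℝ) + x)) = fun m : ℕ => Q ^ m * Q ^ x := by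
        funext m
        rw [Real.rpow_add h0, Real.rpow_natCast]
      rw [this]
      exact (summable_geometric_of_lt_one h0.le h1).mul_right _
    have hA0 : ∀ m : ℕ, 0 ≤ Q ^ ((m : ℝ) + x) := fun m => (Real.rpow_pos_of_pos h0 _).le
    have hB0 : ∀ m : ℕ, 0 ≤ qNum Q ((m : ℝ) + x) := by
      intro m
      apply div_nonneg _ h1Q.le
      rw [sub_nonneg]
      exact Real.rpow_le_one h0.le h1.le (by positivity)
    have hBC : ∀ m : ℕ, qNum Q ((m : ℝ) + x) ≤ 1 / (1 - Q) := by
      intro m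
      unfold qNum
      gcongr <;>
        · have := Real.rpow_pos_of_pos h0 ((m : ℝ) + x)
          linarith
    exact contDiff_expSeries _ _ hA hA0 (1 / (1 - Q)) hB0 hBC

lemma iteratedDeriv_sum_comp (s : Finset ℕ) (w : ℕ → ℂ) (g : ℕ → ℂ → ℂ)
    (hg : ∀ a ∈ s, ContDiff ℂ (⊤ : ℕ∞) (g a)) (c : ℂ) (n : ℕ) (x : ℂ) :
    iteratedDeriv n (fun t => ∑ a ∈ s, w a * g a (c * t)) x
      = c ^ n * ∑ a ∈ s, w a * iteratedDeriv n (g a) (c * x) := by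
  induction n generalizing x with
  | zero => simp
  | succ n ih =>
    rw [iteratedDeriv_succ, funext ih]
    have H : HasDerivAt (fun x : ℂ => c ^ n * ∑ a ∈ s, w a * iteratedDeriv n (g a) (c * x))
        (c ^ n * ∑ a ∈ s, w a * (iteratedDeriv (n + 1) (g a) (c * x) * c)) x := by
      apply HasDerivAt.const_mul
      apply HasDerivAt.fun_sum
      intro a ha
      apply HasDerivAt.const_mul
      have hd : HasDerivAt (iteratedDeriv n (g a)) (iteratedDeriv (n + 1) (g a) (c * x))
          (c * x) := by
        rw [iteratedDeriv_succ]
        have hlt : (n : WithTop ℕ∞) < ((⊤ : ℕ∞) : WithTop ℕ∞) := by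
          exact_mod_cast (lt_top_iff_ne_top.2 (by simp) : (n : ℕ∞) < ⊤)
        exact (((hg a ha).differentiable_iteratedDeriv n hlt).differentiableAt).hasDerivAt
      have hin : HasDerivAt (fun x : ℂ => c * x) c x := by
        simpa using (hasDerivAt_id x).const_mul c
      exact hd.comp x hin
    rw [H.deriv]
    have : ∑ a ∈ s, w a * (iteratedDeriv (n + 1) (g a) (c * x) * c)
        = (∑ a ∈ s, w a * iteratedDeriv (n + 1) (g a) (c * x)) * c := by
      rw [Finset.sum_mul]
      exact Finset.sum_congr rfl fun a _ => by ring
    rw [this]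
    ring

lemma charSum_eq_zero {f : ℕ} (hf : 1 ≤ f) (χ : DirichletCharacter ℂ f) (hχ : χ ≠ 1) :
    ∑ a ∈ Finset.Icc 1 f, χ ((a : ℕ) : ZMod f) = 0 := by
  haveI : NeZero f := ⟨by omega⟩
  have key : ∑ a ∈ Finset.Icc 1 f, χ ((a : ℕ) : ZMod f) = ∑ b : ZMod f, χ b := by
    apply Finset.sum_nbij' (fun a => ((a : ℕ) : ZMod f))
      (fun b => if b = 0 then f else b.val)
    · intro a _; exact Finset.mem_univ _
    · intro b _
      by_cases hb : b = 0
      · simp [hb, Finset.mem_Icc, hf]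
      · rw [if_neg hb, Finset.mem_Icc]
        constructor
        · have : 0 < b.val := by
            rcases Nat.eq_zero_or_pos b.val with h | h
            · exfalso; apply hb
              have := ZMod.natCast_rightInverse (n := f) b
              rw [← this, h]; simp
            · exact h
          omega
        · exact (ZMod.val_lt b).le
    · intro a ha
      simp only [Finset.mem_Icc] at ha
      by_cases haf : a = f
      · subst haf
        simp [ZMod.natCast_self]
      · have halt : a < f := lt_of_le_of_ne ha.2 haf
        have hne : ((a : ℕ) : ZMod f) ≠ 0 := by
          rw [Ne, ZMod.natCast_eq_zero_iff]
          intro hdvd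
          rcases hdvd with ⟨k, hk⟩
          rcases Nat.eq_zero_or_pos k with h | h
          · subst h; simp at hk; omega
          · nlinarith
        rw [if_neg hne, ZMod.val_natCast_of_lt halt]
    · intro b _
      by_cases hb : b = 0
      · simp [hb, ZMod.natCast_self]
      · rw [if_neg hb]
        exact ZMod.natCast_rightInverse b
    · intro a _; rfl
  rw [key]
  exact MulChar.sum_eq_zero_of_ne_one hχ

lemma gen_eq (q : ℝ) (hq0 : 0 < q) (hq1 : q < 1) (f : ℕ) (hf : 1 ≤ f)
    (χ : DirichletCharacter ℂ f) (hχ : χ ≠ 1) :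
    genQBernoulliGen q f χ = fun t => ∑ a ∈ Finset.Icc 1 f,
      ((((qNum q (f : ℝ) : ℝ) : ℂ))⁻¹ * χ ((a : ℕ) : ZMod f)) *
        qBernoulliPolyGen (q ^ f) ((a : ℝ) / (f : ℝ)) (((qNum q (f : ℝ) : ℝ) : ℂ) * t) := by
  have hfR : (0 : ℝ) < f := by exact_mod_cast hf
  have hfne : (f : ℝ) ≠ 0 := hfR.ne'
  have hqf0 : (0 : ℝ) < q ^ f := pow_pos hq0 f
  have hqf1 : q ^ f < 1 := pow_lt_one₀ hq0.le hq1 (by omega)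
  have h1q : (0 : ℝ) < 1 - q := by linarith
  have h1qf : (0 : ℝ) < 1 - q ^ f := by linarith
  have hcR : qNum q (f : ℝ) = (1 - q ^ f) / (1 - q) := by
    unfold qNum; rw [Real.rpow_natCast]
  have hcpos : 0 < qNum q (f : ℝ) := by rw [hcR]; positivity
  set c : ℂ := ((qNum q (f : ℝ) : ℝ) : ℂ) with hc
  have hc0 : c ≠ 0 := by
    simp only [hc, Ne, Complex.ofReal_eq_zero]
    exact hcpos.ne'
  funext t
  -- termwise identities
  have hi : ∀ a m : ℕ, ((q ^ f : ℝ)) ^ ((m : ℝ) + (a : ℝ) / f) = q ^ (f * m + a) := by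
    intro a m
    have hexp_eq : (f : ℝ) * ((m : ℝ) + (a : ℝ) / f) = ((f * m + a : ℕ) : ℝ) := by
      push_cast; field_simp
    rw [← Real.rpow_natCast q f, ← Real.rpow_mul hq0.le, hexp_eq, Real.rpow_natCast]
  have hii : ∀ a m : ℕ, qNum (q ^ f) ((m : ℝ) + (a : ℝ) / f) * qNum q (f : ℝ)
      = qNum q ((f * m + a : ℕ) : ℝ) := by
    intro a m
    unfold qNum
    rw [hi a m, Real.rpow_natCast, Real.rpow_natCast]
    field_simp
  have hS : ∀ a : ℕ,
      (∑' m : ℕ, (((q ^ f : ℝ) ^ ((m : ℝ) + (a : ℝ) / f) : ℝ) : ℂ) *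
        Complex.exp (((qNum (q ^ f) ((m : ℝ) + (a : ℝ) / f) : ℝ) : ℂ) * (c * t)))
      = ∑' m : ℕ, (q : ℂ) ^ (f * m + a) *
        Complex.exp (((qNum q ((f * m + a : ℕ) : ℝ) : ℝ) : ℂ) * t) := by
    intro a
    apply tsum_congr
    intro m
    congr 1
    · rw [hi a m]; push_cast; ring
    · rw [← mul_assoc, ← Complex.ofReal_mul, hii a m]
  -- expand
  unfold genQBernoulliGen qBernoulliPolyGen
  set K : ℂ := (((q ^ f - 1) / Real.log (q ^ f) : ℝ) : ℂ) *
    Complex.exp ((c * t) / (1 - ((q ^ f : ℝ) : ℂ))) with hK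
  set S : ℕ → ℂ := fun a => ∑' m : ℕ, (q : ℂ) ^ (f * m + a) *
    Complex.exp (((qNum q ((f * m + a : ℕ) : ℝ) : ℝ) : ℂ) * t) with hSdef
  have step1 : ∑ a ∈ Finset.Icc 1 f, ((c⁻¹ * χ ((a : ℕ) : ZMod f)) *
      (K - (c * t) * ∑' m : ℕ, (((q ^ f) ^ ((m : ℝ) + (a : ℝ) / f) : ℝ) : ℂ) *
        Complex.exp (((qNum (q ^ f) ((m : ℝ) + (a : ℝ) / f) : ℝ) : ℂ) * (c * t))))
      = ∑ a ∈ Finset.Icc 1 f, (χ ((a : ℕ) : ZMod f) * (c⁻¹ * K)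
          - χ ((a : ℕ) : ZMod f) * (t * S a)) := by
    apply Finset.sum_congr rfl
    intro a _
    rw [hS a]
    simp only [hSdef]
    field_simp
  rw [step1, Finset.sum_sub_distrib, ← Finset.sum_mul, charSum_eq_zero hf χ hχ, zero_mul,
    zero_sub]
  have h2 : ∑ a ∈ Finset.Icc 1 f, χ ((a : ℕ) : ZMod f) * (t * S a)
      = t * ∑ a ∈ Finset.Icc 1 f, χ ((a : ℕ) : ZMod f) * S a := by
    rw [Finset.mul_sum]; exact Finset.sum_congr rfl fun a _ => by ring
  rw [h2]
  ring

/-- For `0 < q < 1` and a nontrivial Dirichlet character `χ` mod `f`,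
`β_{n,χ,q} = [f]_q^{n-1} Σ_{a=1}^{f} χ(a) β_{n,q^f}(a/f)`. -/
theorem genQBernoulli_eq (q : ℝ) (hq0 : 0 < q) (hq1 : q < 1)
    (f : ℕ) (hf : 1 ≤ f) (χ : DirichletCharacter ℂ f) (hχ : χ ≠ 1) (n : ℕ) :
    genQBernoulli q f χ n =
    ((qNum q (f : ℝ) : ℝ) : ℂ) ^ ((n : ℤ) - 1) *
      ∑ a ∈ Finset.Icc 1 f, χ ((a : ℕ) : ZMod f) *
        qBernoulliPoly (q ^ f) n ((a : ℝ) / (f : ℝ)) := by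
  have hqf0 : (0 : ℝ) < q ^ f := pow_pos hq0 f
  have hqf1 : q ^ f < 1 := pow_lt_one₀ hq0.le hq1 (by omega)
  have hcR : qNum q (f : ℝ) = (1 - q ^ f) / (1 - q) := by
    unfold qNum; rw [Real.rpow_natCast]
  have hcpos : 0 < qNum q (f : ℝ) := by
    rw [hcR]
    have : (0:ℝ) < 1 - q := by linarith
    have : (0:ℝ) < 1 - q ^ f := by linarith
    positivity
  set c : ℂ := ((qNum q (f : ℝ) : ℝ) : ℂ) with hc
  have hc0 : c ≠ 0 := by
    simp only [hc, Ne, Complex.ofReal_eq_zero]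
    exact hcpos.ne'
  have hg : ∀ a ∈ Finset.Icc 1 f,
      ContDiff ℂ (⊤ : ℕ∞) (qBernoulliPolyGen (q ^ f) ((a : ℝ) / (f : ℝ))) := by
    intro a ha
    exact contDiff_qBernoulliPolyGen hqf0 hqf1 (by positivity)
  unfold genQBernoulli
  rw [gen_eq q hq0 hq1 f hf χ hχ]
  rw [iteratedDeriv_sum_comp (Finset.Icc 1 f)
    (fun a => c⁻¹ * χ ((a : ℕ) : ZMod f))
    (fun a => qBernoulliPolyGen (q ^ f) ((a : ℝ) / (f : ℝ))) hg c n 0]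
  simp only [mul_zero]
  have hz : c ^ ((n : ℤ) - 1) = c ^ n * c⁻¹ := by
    rw [zpow_sub₀ hc0, zpow_natCast, zpow_one, div_eq_mul_inv]
  rw [hz]
  have h3 : ∑ a ∈ Finset.Icc 1 f, (c⁻¹ * χ ((a : ℕ) : ZMod f)) *
      iteratedDeriv n (qBernoulliPolyGen (q ^ f) ((a : ℝ) / (f : ℝ))) 0
      = c⁻¹ * ∑ a ∈ Finset.Icc 1 f, χ ((a : ℕ) : ZMod f) *
        qBernoulliPoly (q ^ f) n ((a : ℝ) / (f : ℝ)) := by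
    rw [Finset.mul_sum]
    apply Finset.sum_congr rfl
    intro a _
    unfold qBernoulliPoly
    ring
  rw [h3]
  ring
end

section
/- Let 0<q<1 be a real number, let x>0 be a real number and let n≥0 be an integer. Then β_{n,q}(x) = (1/(1−q))^n · ( (q−1)/log q + Σ_{i=1}^{n} C(n,i) (−1)^i q^{xi} · i/[i]_q ), where C(n,i) is the binomial coefficient; that is, the q-Bernoulli polynomial admits this closed-form expression, the i=0 term of the sum Σ_{i=0}^n C(n,i)(−1)^i q^{xi} i/[i]_q being interpreted as (q−1)/log q. -/
section aux

lemma qaux_qNum_nonneg {q y : ℝ} (hq0 : 0 < q) (hq1 : q < 1) (hy : 0 ≤ y) : 0 ≤ qNum q y :=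
  div_nonneg (by linarith [Real.rpow_le_one hq0.le hq1.le hy]) (by linarith)

lemma qaux_qNum_le {q y : ℝ} (hq0 : 0 < q) (hq1 : q < 1) (hy : 0 ≤ y) :
    qNum q y ≤ 1 / (1 - q) := by
  have h1 : (0:ℝ) < 1 - q := by linarith
  have h2 : 0 < q ^ y := Real.rpow_pos_of_pos hq0 y
  rw [qNum, div_le_div_iff₀ h1 h1]
  nlinarith

/-- The double family is summable. -/
lemma qaux_summable {q x : ℝ} (hq0 : 0 < q) (hq1 : q < 1) (hx : 0 < x) (z : ℂ) :
    Summable (fun p : ℕ × ℕ => ((q ^ ((p.1 : ℝ) + x) : ℝ) : ℂ) *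
      (((qNum q ((p.1 : ℝ) + x) : ℝ) : ℂ) * z) ^ p.2 / (Nat.factorial p.2)) := by
  have h1 : (0:ℝ) < 1 - q := by linarith
  apply Summable.of_norm
  have hb : Summable (fun p : ℕ × ℕ => (q ^ x * q ^ p.1) *
      ((1 / (1 - q) * ‖z‖) ^ p.2 / (Nat.factorial p.2))) := by
    have hgeo : Summable (fun m : ℕ => q ^ x * q ^ m) :=
      (summable_geometric_of_lt_one hq0.le hq1).mul_left _
    have hexp : Summable (fun k : ℕ => (1 / (1 - q) * ‖z‖) ^ k / (Nat.factorial k)) :=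
      Real.summable_pow_div_factorial _
    exact hgeo.mul_of_nonneg hexp (fun m => by positivity)
      (fun k => by
        have h0 : (0:ℝ) ≤ 1 / (1 - q) * ‖z‖ := by positivity
        positivity)
  apply Summable.of_nonneg_of_le (fun _ => norm_nonneg _) _ hb
  rintro ⟨m, k⟩
  have hmx : (0:ℝ) ≤ (m : ℝ) + x := by positivity
  have ha0 : 0 ≤ qNum q ((m : ℝ) + x) := qaux_qNum_nonneg hq0 hq1 hmx
  have ha1 : qNum q ((m : ℝ) + x) ≤ 1 / (1 - q) := qaux_qNum_le hq0 hq1 hmx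
  have hc : q ^ ((m : ℝ) + x) = q ^ x * q ^ m := by
    rw [Real.rpow_add hq0, Real.rpow_natCast, mul_comm]
  simp only [norm_div, norm_mul, norm_pow, Complex.norm_real, Complex.norm_natCast,
    Real.norm_eq_abs]
  rw [abs_of_nonneg (Real.rpow_pos_of_pos hq0 _).le, abs_of_nonneg ha0, hc]
  rw [mul_div_assoc]
  gcongr

end aux

noncomputable def qauxS (q x : ℝ) (k : ℕ) : ℝ :=
  ∑' m : ℕ, q ^ ((m : ℝ) + x) * (qNum q ((m : ℝ) + x)) ^ k

noncomputable def qauxd (q x : ℝ) : ℕ → ℂ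
  | 0 => 0
  | (j+1) => ((qauxS q x j : ℝ) : ℂ) / (Nat.factorial j)

noncomputable def qauxb (q x : ℝ) : ℕ → ℂ := fun k =>
  (((q - 1) / Real.log q : ℝ) : ℂ) * (1 / (1 - (q:ℂ))) ^ k / (Nat.factorial k) -
    qauxd q x k

lemma qaux_hasSum_series {q x : ℝ} (hq0 : 0 < q) (hq1 : q < 1) (hx : 0 < x) (z : ℂ) :
    HasSum (fun k : ℕ => ((qauxS q x k : ℝ) : ℂ) * z ^ k / (Nat.factorial k))
      (∑' m : ℕ, ((q ^ ((m : ℝ) + x) : ℝ) : ℂ) *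
        Complex.exp (((qNum q ((m : ℝ) + x) : ℝ) : ℂ) * z)) := by
  classical
  set g : ℕ × ℕ → ℂ := fun p => ((q ^ ((p.1 : ℝ) + x) : ℝ) : ℂ) *
      (((qNum q ((p.1 : ℝ) + x) : ℝ) : ℂ) * z) ^ p.2 / (Nat.factorial p.2) with hgdef
  have hg : Summable g := qaux_summable hq0 hq1 hx z
  have hT : HasSum g (∑' p, g p) := hg.hasSum
  have hfib : ∀ m : ℕ, HasSum (fun k => g (m, k))
      (((q ^ ((m : ℝ) + x) : ℝ) : ℂ) *
        Complex.exp (((qNum q ((m : ℝ) + x) : ℝ) : ℂ) * z)) := by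
    intro m
    have h := (NormedSpace.expSeries_div_hasSum_exp
      (((qNum q ((m : ℝ) + x) : ℝ) : ℂ) * z)).mul_left ((q ^ ((m : ℝ) + x) : ℝ) : ℂ)
    rw [Complex.exp_eq_exp_ℂ]
    convert h using 2 with k
    · rfl
    simp [hgdef, mul_div_assoc]
  have hS : HasSum (fun m : ℕ => ((q ^ ((m : ℝ) + x) : ℝ) : ℂ) *
      Complex.exp (((qNum q ((m : ℝ) + x) : ℝ) : ℂ) * z)) (∑' p, g p) :=
    hT.prod_fiberwise hfib
  rw [show (∑' m : ℕ, ((q ^ ((m : ℝ) + x) : ℝ) : ℂ) *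
      Complex.exp (((qNum q ((m : ℝ) + x) : ℝ) : ℂ) * z)) = ∑' p, g p from hS.tsum_eq]
  have hfib2 : ∀ k : ℕ, HasSum (fun m => g (m, k))
      (((qauxS q x k : ℝ) : ℂ) * z ^ k / (Nat.factorial k)) := by
    intro k
    have hsum : Summable (fun m => g (m, k)) := hg.prod_symm.prod_factor k
    have heq : ∀ m : ℕ, g (m, k) =
        (((q ^ ((m : ℝ) + x) * (qNum q ((m : ℝ) + x)) ^ k : ℝ)) : ℂ) *
          (z ^ k / (Nat.factorial k)) := by
      intro m
      simp only [hgdef]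
      push_cast
      ring
    have := hsum.hasSum
    rw [show (∑' m, g (m, k)) = ((qauxS q x k : ℝ) : ℂ) * z ^ k / (Nat.factorial k) from ?_] at this
    · exact this
    · rw [tsum_congr heq, tsum_mul_right, ← Complex.ofReal_tsum, qauxS, mul_div_assoc]
  have hT' : HasSum (fun p : ℕ × ℕ => g p.swap) (∑' p, g p) :=
    (Equiv.prodComm ℕ ℕ).hasSum_iff.mpr hT
  exact hT'.prod_fiberwise hfib2

lemma qaux_hasSum {q x : ℝ} (hq0 : 0 < q) (hq1 : q < 1) (hx : 0 < x) (z : ℂ) :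
    HasSum (fun k : ℕ => z ^ k • qauxb q x k) (qBernoulliPolyGen q x (0 + z)) := by
  have h1 : HasSum (fun k : ℕ => z ^ k • ((((q - 1) / Real.log q : ℝ) : ℂ) *
      (1 / (1 - (q:ℂ))) ^ k / (Nat.factorial k)))
      ((((q - 1) / Real.log q : ℝ) : ℂ) * Complex.exp (z / (1 - (q:ℂ)))) := by
    have h := (NormedSpace.expSeries_div_hasSum_exp
      (z * (1 / (1 - (q:ℂ))))).mul_left (((q - 1) / Real.log q : ℝ) : ℂ)
    rw [mul_one_div] at h
    rw [Complex.exp_eq_exp_ℂ]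
    convert h using 2 with k
    · rfl
    rw [smul_eq_mul]
    ring
  have h2 : HasSum (fun k : ℕ => z ^ k • qauxd q x k)
      (z * ∑' m : ℕ, ((q ^ ((m : ℝ) + x) : ℝ) : ℂ) *
        Complex.exp (((qNum q ((m : ℝ) + x) : ℝ) : ℂ) * z)) := by
    have h := (qaux_hasSum_series hq0 hq1 hx z).mul_left z
    have h' : HasSum (fun j : ℕ => z ^ (j + 1) • qauxd q x (j + 1))
        (z * ∑' m : ℕ, ((q ^ ((m : ℝ) + x) : ℝ) : ℂ) *
          Complex.exp (((qNum q ((m : ℝ) + x) : ℝ) : ℂ) * z)) := by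
      convert h using 2 with j
      · rfl
      rw [smul_eq_mul, qauxd]
      ring
    refine (hasSum_nat_add_iff' 1).mp ?_
    simpa only [Finset.range_one, Finset.sum_singleton, pow_zero,
      show qauxd q x 0 = 0 from rfl, smul_zero, sub_zero] using h'
  have := h1.sub h2
  rw [zero_add, qBernoulliPolyGen]
  convert this using 2 with k
  · rfl
  rw [qauxb, smul_sub]

lemma qaux_iteratedDeriv {q x : ℝ} (hq0 : 0 < q) (hq1 : q < 1) (hx : 0 < x) (n : ℕ) :
    qBernoulliPoly q n x = (Nat.factorial n : ℂ) * qauxb q x n := by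
  have hcoeff : ∀ k, (FormalMultilinearSeries.ofScalars ℂ (qauxb q x)).coeff k
      = qauxb q x k := by
    intro k
    rw [FormalMultilinearSeries.coeff, show (1 : Fin k → ℂ) = fun _ => (1:ℂ) from rfl,
      FormalMultilinearSeries.ofScalars_apply_eq, one_pow, smul_eq_mul, mul_one]
  have hps : HasFPowerSeriesAt (qBernoulliPolyGen q x)
      (FormalMultilinearSeries.ofScalars ℂ (qauxb q x)) 0 := by
    rw [hasFPowerSeriesAt_iff]
    filter_upwards with z
    simpa only [hcoeff] using qaux_hasSum hq0 hq1 hx z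
  obtain ⟨r, hr⟩ := hps
  have h := hr.factorial_smul (y := (1 : ℂ)) n
  rw [FormalMultilinearSeries.ofScalars_apply_eq, one_pow, smul_eq_mul, mul_one] at h
  rw [qBernoulliPoly, iteratedDeriv_eq_iteratedFDeriv, ← h, nsmul_eq_mul]

lemma qauxS_eq {q x : ℝ} (hq0 : 0 < q) (hq1 : q < 1) (hx : 0 < x) (k : ℕ) :
    qauxS q x k = ∑ j ∈ Finset.range (k + 1),
      ((1 / (1 - q)) ^ k * (k.choose j : ℝ) * (-1 : ℝ) ^ j * q ^ (x * ((j : ℝ) + 1))) *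
        (1 - q ^ (j + 1))⁻¹ := by
  have h1q : (0:ℝ) < 1 - q := by linarith
  have hterm : ∀ m : ℕ, q ^ ((m : ℝ) + x) * (qNum q ((m : ℝ) + x)) ^ k =
      ∑ j ∈ Finset.range (k + 1),
        ((1 / (1 - q)) ^ k * (k.choose j : ℝ) * (-1 : ℝ) ^ j * q ^ (x * ((j : ℝ) + 1))) *
          ((q ^ (j + 1)) ^ m) := by
    intro m
    set w := q ^ ((m : ℝ) + x) with hwdef
    have hwj : ∀ j : ℕ, w * w ^ j = q ^ (x * ((j : ℝ) + 1)) * (q ^ (j + 1)) ^ m := by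
      intro j
      have h1 : w * w ^ j = w ^ (j + 1) := by ring
      have h2 : w ^ (j + 1) = q ^ (((m : ℝ) + x) * ((j : ℝ) + 1)) := by
        rw [hwdef, ← Real.rpow_natCast (q ^ ((m : ℝ) + x)) (j + 1), ← Real.rpow_mul hq0.le]
        push_cast
        ring_nf
      have h3 : q ^ (((m : ℝ) + x) * ((j : ℝ) + 1)) =
          q ^ (x * ((j : ℝ) + 1)) * q ^ (((j : ℝ) + 1) * (m : ℝ)) := by
        rw [← Real.rpow_add hq0]
        ring_nf
      have h4 : q ^ (((j : ℝ) + 1) * (m : ℝ)) = ((q : ℝ) ^ (j + 1)) ^ m := by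
        rw [Real.rpow_mul hq0.le, show ((j : ℝ) + 1) = ((j + 1 : ℕ) : ℝ) by push_cast; ring,
          Real.rpow_natCast, Real.rpow_natCast]
      rw [h1, h2, h3, h4]
    have hbin : (1 - w) ^ k =
        ∑ j ∈ Finset.range (k + 1), (-w) ^ j * 1 ^ (k - j) * (k.choose j : ℝ) := by
      rw [sub_eq_add_neg, add_comm]
      exact add_pow _ _ _
    have hstart : w * (qNum q ((m : ℝ) + x)) ^ k = (1 / (1 - q)) ^ k * (w * (1 - w) ^ k) := by
      rw [qNum, ← hwdef]
      rw [div_pow, one_div_pow]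
      ring
    rw [hstart, hbin, Finset.mul_sum, Finset.mul_sum]
    refine Finset.sum_congr rfl fun j hj => ?_
    have := hwj j
    rw [neg_pow]
    linear_combination ((1 / (1 - q)) ^ k * (k.choose j : ℝ) * (-1 : ℝ) ^ j) * this
  rw [qauxS, tsum_congr hterm]
  rw [Summable.tsum_finsetSum (fun j hj =>
    (summable_geometric_of_lt_one (by positivity) (pow_lt_one₀ hq0.le hq1 j.succ_ne_zero)).mul_left _)]
  refine Finset.sum_congr rfl fun j hj => ?_
  rw [tsum_mul_left, tsum_geometric_of_lt_one (by positivity)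
    (pow_lt_one₀ hq0.le hq1 j.succ_ne_zero)]


/-- For `0 < q < 1`, real `x > 0` and `n ≥ 0`, the `q`-Bernoulli polynomial has the
closed form `β_{n,q}(x) = (1/(1-q))^n ((q-1)/log q + Σ_{i=1}^{n} C(n,i)(-1)^i q^{xi}
i/[i]_q)`. -/
theorem qBernoulliPoly_closed_form (q : ℝ) (hq0 : 0 < q) (hq1 : q < 1)
    (x : ℝ) (hx : 0 < x) (n : ℕ) :
    qBernoulliPoly q n x =
    (1 / (1 - (q : ℂ))) ^ n *
      ((((q - 1) / Real.log q : ℝ) : ℂ) +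
        ∑ i ∈ Finset.Icc 1 n,
          (n.choose i : ℂ) * (-1 : ℂ) ^ i * ((q ^ (x * (i : ℝ)) : ℝ) : ℂ) *
            (i : ℂ) / ((qNum q (i : ℝ) : ℝ) : ℂ)) := by
  have h1q : (0:ℝ) < 1 - q := by linarith
  have hq1C : (1 - (q:ℂ)) ≠ 0 := by
    simpa using Complex.ofReal_ne_zero.mpr (ne_of_gt h1q)
  rw [qaux_iteratedDeriv hq0 hq1 hx n]
  cases n with
  | zero => simp [qauxb, qauxd]
  | succ k =>
    obtain ⟨A, hA⟩ : ∃ A : ℂ, (((q - 1) / Real.log q : ℝ) : ℂ) = A := ⟨_, rfl⟩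
    obtain ⟨c, hc⟩ : ∃ c : ℂ, (1 / (1 - (q:ℂ))) = c := ⟨_, rfl⟩
    rw [hA, hc]
    have hdd : qauxd q x (k+1) = ((qauxS q x k : ℝ) : ℂ) / (Nat.factorial k) := rfl
    have hfack : ((Nat.factorial k : ℂ)) ≠ 0 := by
      exact_mod_cast Nat.cast_ne_zero.mpr (Nat.factorial_ne_zero k)
    obtain ⟨Sc, hSc⟩ : ∃ Sc : ℂ, ((qauxS q x k : ℝ) : ℂ) = Sc := ⟨_, rfl⟩
    have hstep : ((Nat.factorial (k+1) : ℂ)) * qauxb q x (k+1)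
        = A * c ^ (k+1) - ((k:ℂ)+1) * Sc := by
      rw [qauxb, hdd, hSc, hA, hc]
      have hN : ((Nat.factorial (k+1) : ℂ)) = ((k:ℂ)+1) * (Nat.factorial k : ℂ) := by
        push_cast [Nat.factorial_succ]
        ring
      rw [hN]
      have h2 : ((k:ℂ)+1) ≠ 0 := Nat.cast_add_one_ne_zero k
      field_simp
    rw [hstep, ← hSc, qauxS_eq hq0 hq1 hx k]
    rw [show Finset.Icc 1 (k+1) = Finset.Ico 1 (k+2) from by rw [← Finset.Ico_add_one_right_eq_Icc]; rfl]
    rw [Finset.sum_Ico_eq_sum_range]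
    push_cast
    rw [hc]
    rw [mul_add, mul_comm (c ^ (k+1)) A, Finset.mul_sum, Finset.mul_sum,
      sub_eq_add_neg, neg_eq_neg_one_mul, Finset.mul_sum]
    congr 1
    refine Finset.sum_congr rfl fun j hj => ?_
    have hr : (0:ℝ) < 1 - q ^ (j+1) := by
      have := pow_lt_one₀ hq0.le hq1 (by omega : j + 1 ≠ 0)
      linarith
    have hrC : ((1:ℂ) - (q:ℂ) ^ (j+1)) ≠ 0 := by
      have h := Complex.ofReal_ne_zero.mpr (ne_of_gt hr)
      push_cast at h
      exact h
    have hexp : x * (1 + (j:ℝ)) = x * ((j:ℝ)+1) := by ring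
    have hqn : (qNum q (1+(j:ℝ)) : ℝ) = (1 - q ^ (j+1))/(1-q) := by
      rw [qNum, show (1+(j:ℝ)) = ((j+1 : ℕ):ℝ) by push_cast; ring, Real.rpow_natCast]
    have hch : ((k:ℂ)+1) * ((k.choose j : ℕ):ℂ) = (((k+1).choose (1+j) : ℕ):ℂ) * ((j:ℂ)+1) := by
      have h := Nat.add_one_mul_choose_eq k j
      rw [add_comm 1 j]
      exact_mod_cast congrArg (Nat.cast : ℕ → ℂ) h
    rw [hexp, hqn]
    obtain ⟨Qj, hQj⟩ : ∃ r : ℝ, q ^ (x * ((j:ℝ) + 1)) = r := ⟨_, rfl⟩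
    rw [hQj]
    push_cast
    rw [← hc]
    field_simp
    linear_combination (-(1/(1-(q:ℂ)))^k * (-1:ℂ)^j * ((Qj:ℝ):ℂ)) * hch -
      ((1/(1-(q:ℂ)))^k * (((k+1).choose (1+j) : ℕ):ℂ) * (-1:ℂ)^(1+j) * (1+(j:ℂ)) *
        ((Qj:ℝ):ℂ)) * (mul_one_div_cancel hq1C)
end

section
/- Let 0<q<1 be a real number, let x>0 be a real number and let n≥0 be an integer. Then β_{n,q}(x) = Σ_{i=0}^{n} C(n,i) · q^{xi} · β_{i,q} · [x]_q^{n−i}, where β_{i,q} = β_{i,q}(0) and C(n,i) is the binomial coefficient. -/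
/-- Functional equation `F_q(t,x) = e^{[x]_q t} F_q(q^x t, 0)`. -/
lemma qBernoulliPolyGen_eq (q : ℝ) (hq0 : 0 < q) (hq1 : q < 1) (x : ℝ) (t : ℂ) :
    qBernoulliPolyGen q x t =
      Complex.exp (((qNum q x : ℝ) : ℂ) * t) *
        qBernoulliPolyGen q 0 (((q ^ x : ℝ) : ℂ) * t) := by
  have hq1' : (1 : ℝ) - q ≠ 0 := by linarith
  have key1 : ((qNum q x : ℝ) : ℂ) + ((q ^ x : ℝ) : ℂ) / (1 - (q : ℂ)) = 1 / (1 - (q : ℂ)) := by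
    have : qNum q x + q ^ x / (1 - q) = 1 / (1 - q) := by
      rw [qNum]; field_simp; ring
    calc ((qNum q x : ℝ) : ℂ) + ((q ^ x : ℝ) : ℂ) / (1 - (q : ℂ))
        = (((qNum q x + q ^ x / (1 - q) : ℝ)) : ℂ) := by push_cast; ring
      _ = (((1 / (1 - q) : ℝ)) : ℂ) := by rw [this]
      _ = 1 / (1 - (q : ℂ)) := by push_cast; ring
  have key2 : ∀ m : ℕ, qNum q ((m : ℝ) + x) = qNum q x + q ^ x * qNum q ((m : ℝ) + 0) := by
    intro m
    have h1 : q ^ ((m : ℝ) + x) = q ^ (m : ℝ) * q ^ x := by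
      rw [← Real.rpow_add hq0]
    simp only [qNum, add_zero, h1]
    field_simp
    ring
  have key3 : ∀ m : ℕ, q ^ ((m : ℝ) + x) = q ^ x * q ^ ((m : ℝ) + 0) := by
    intro m
    rw [add_zero, ← Real.rpow_add hq0]
    ring_nf
  unfold qBernoulliPolyGen
  rw [mul_sub]
  congr 1
  · have : Complex.exp (((qNum q x : ℝ) : ℂ) * t) *
        Complex.exp (((q ^ x : ℝ) : ℂ) * t / (1 - (q : ℂ))) = Complex.exp (t / (1 - (q : ℂ))) := by
      rw [← Complex.exp_add]
      congr 1
      have h2 : ((q ^ x : ℝ) : ℂ) * t / (1 - (q : ℂ)) + ((qNum q x : ℝ) : ℂ) * t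
          = (((qNum q x : ℝ) : ℂ) + ((q ^ x : ℝ) : ℂ) / (1 - (q : ℂ))) * t := by ring
      rw [add_comm, h2, key1]; ring
    rw [← this]; ring
  · -- t * Σ' q^{m+x} e^{[m+x]t} = e^{[x]t} * ((q^x t) * Σ' q^m e^{[m](q^x t)})
    have hterm : ∀ m : ℕ,
        ((q ^ ((m : ℝ) + x) : ℝ) : ℂ) * Complex.exp (((qNum q ((m : ℝ) + x) : ℝ) : ℂ) * t)
        = (Complex.exp (((qNum q x : ℝ) : ℂ) * t) * ((q ^ x : ℝ) : ℂ)) *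
          (((q ^ ((m : ℝ) + 0) : ℝ) : ℂ) *
            Complex.exp (((qNum q ((m : ℝ) + 0) : ℝ) : ℂ) * (((q ^ x : ℝ) : ℂ) * t))) := by
      intro m
      rw [key3 m, key2 m]
      push_cast
      rw [add_mul, Complex.exp_add]
      ring
    rw [tsum_congr hterm, tsum_mul_left]
    ring

/-- The series part of `F_q(·,0)` is entire. -/
lemma qBernoulliPolyGen_series_differentiable (q : ℝ) (hq0 : 0 < q) (hq1 : q < 1) :
    Differentiable ℂ (fun t : ℂ => ∑' m : ℕ, ((q ^ ((m : ℝ) + 0) : ℝ) : ℂ) *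
      Complex.exp (((qNum q ((m : ℝ) + 0) : ℝ) : ℂ) * t)) := by
  have h1q : (0 : ℝ) < 1 - q := by linarith
  set f : ℕ → ℂ → ℂ := fun m t => ((q ^ ((m : ℝ) + 0) : ℝ) : ℂ) *
      Complex.exp (((qNum q ((m : ℝ) + 0) : ℝ) : ℂ) * t) with hf
  have hqm : ∀ m : ℕ, q ^ ((m : ℝ) + 0) = q ^ m := by
    intro m; rw [add_zero, Real.rpow_natCast]
  have hqm_pos : ∀ m : ℕ, 0 < q ^ ((m : ℝ) + 0) := by
    intro m; rw [hqm]; positivity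
  have hqm_le : ∀ m : ℕ, q ^ ((m : ℝ) + 0) ≤ 1 := by
    intro m; rw [hqm]; exact pow_le_one₀ hq0.le hq1.le
  have hd0 : ∀ m : ℕ, 0 ≤ qNum q ((m : ℝ) + 0) := by
    intro m
    apply div_nonneg _ h1q.le
    linarith [hqm_le m]
  have hdM : ∀ m : ℕ, qNum q ((m : ℝ) + 0) ≤ 1 / (1 - q) := by
    intro m
    rw [qNum, div_le_div_iff₀ h1q h1q]
    nlinarith [hqm_pos m]
  -- each f m is entire
  have hfd : ∀ m : ℕ, Differentiable ℂ (f m) := by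
    intro m
    exact (Differentiable.cexp (differentiable_id.const_mul _)).const_mul _
  rw [← differentiableOn_univ]
  apply TendstoLocallyUniformlyOn.differentiableOn (F := fun (I : Finset ℕ) t => ∑ m ∈ I, f m t)
    (φ := Filter.atTop) ?_ ?_ isOpen_univ
  · -- locally uniform convergence
    intro u hu z _
    refine ⟨Metric.ball z 1, ?_, ?_⟩
    · exact nhdsWithin_le_nhds (Metric.ball_mem_nhds z one_pos)
    · set C : ℝ := Real.exp ((‖z‖ + 1) / (1 - q)) with hC
      have hsum : Summable (fun m : ℕ => q ^ m * C) :=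
        (summable_geometric_of_lt_one hq0.le hq1).mul_right C
      have hbound : ∀ (m : ℕ) (t : ℂ), t ∈ Metric.ball z 1 → ‖f m t‖ ≤ q ^ m * C := by
        intro m t ht
        rw [hf]
        simp only [norm_mul, Complex.norm_real, Real.norm_eq_abs]
        rw [abs_of_pos (hqm_pos m), Complex.norm_exp]
        have hre : (((qNum q ((m : ℝ) + 0) : ℝ) : ℂ) * t).re = qNum q ((m : ℝ) + 0) * t.re := by
          simp
        rw [hre, hqm m]
        apply mul_le_mul_of_nonneg_left _ (by positivity)
        apply Real.exp_le_exp.2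
        have htre : t.re ≤ ‖t‖ := Complex.re_le_norm t
        have htz : ‖t‖ ≤ ‖z‖ + 1 := by
          have := mem_ball_iff_norm.1 ht
          calc ‖t‖ = ‖z + (t - z)‖ := by ring_nf
            _ ≤ ‖z‖ + ‖t - z‖ := norm_add_le _ _
            _ ≤ ‖z‖ + 1 := by linarith
        have h1 : qNum q ((m : ℝ) + 0) * t.re ≤ qNum q ((m : ℝ) + 0) * ‖t‖ :=
          mul_le_mul_of_nonneg_left htre (hd0 m)
        have h2 : qNum q ((m : ℝ) + 0) * ‖t‖ ≤ (1 / (1 - q)) * ‖t‖ :=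
          mul_le_mul_of_nonneg_right (hdM m) (norm_nonneg t)
        have h3 : (1 / (1 - q)) * ‖t‖ ≤ (1 / (1 - q)) * (‖z‖ + 1) :=
          mul_le_mul_of_nonneg_left htz (by positivity)
        calc qNum q ((m : ℝ) + 0) * t.re ≤ (1 / (1 - q)) * (‖z‖ + 1) := by linarith
          _ = (‖z‖ + 1) / (1 - q) := by ring
      exact tendstoUniformlyOn_tsum hsum hbound u hu
  · -- partial sums are differentiable
    filter_upwards with I
    exact (fun t _ => ((Differentiable.fun_sum fun m _ => hfd m) t).differentiableWithinAt)

lemma qBernoulliPolyGen_differentiable (q : ℝ) (hq0 : 0 < q) (hq1 : q < 1) :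
    Differentiable ℂ (qBernoulliPolyGen q 0) := by
  unfold qBernoulliPolyGen
  apply Differentiable.sub
  · exact (Differentiable.cexp (differentiable_id.div_const _)).const_mul _
  · exact differentiable_id.mul (qBernoulliPolyGen_series_differentiable q hq0 hq1)

/-- Pascal-style recombination. -/
lemma pascal_sum (a : ℂ) (n : ℕ) (c : ℕ → ℂ) :
    a * (∑ i ∈ Finset.range (n + 1), (n.choose i : ℂ) * a ^ (n - i) * c i) +
      ∑ i ∈ Finset.range (n + 1), (n.choose i : ℂ) * a ^ (n - i) * c (i + 1)
    = ∑ i ∈ Finset.range (n + 2), ((n + 1).choose i : ℂ) * a ^ (n + 1 - i) * c i := by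
  rw [Finset.sum_range_succ' (fun i => ((n + 1).choose i : ℂ) * a ^ (n + 1 - i) * c i) (n + 1)]
  have e1 : ∀ i ∈ Finset.range (n + 1),
      ((n + 1).choose (i + 1) : ℂ) * a ^ (n + 1 - (i + 1)) * c (i + 1)
      = (n.choose i : ℂ) * a ^ (n - i) * c (i + 1)
        + (n.choose (i + 1) : ℂ) * a ^ (n - i) * c (i + 1) := by
    intro i hi
    have : n + 1 - (i + 1) = n - i := by omega
    rw [Nat.choose_succ_succ, this]
    push_cast
    ring
  rw [Finset.sum_congr rfl e1, Finset.sum_add_distrib]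
  -- handle first LHS sum
  have e2 : a * (∑ i ∈ Finset.range (n + 1), (n.choose i : ℂ) * a ^ (n - i) * c i)
      = (∑ i ∈ Finset.range (n + 1), (n.choose (i + 1) : ℂ) * a ^ (n - i) * c (i + 1))
        + ((n + 1).choose 0 : ℂ) * a ^ (n + 1 - 0) * c 0 := by
    rw [Finset.mul_sum, Finset.sum_range_succ' (fun i => a * ((n.choose i : ℂ) * a ^ (n - i) * c i)) n,
      Finset.sum_range_succ (fun i => (n.choose (i + 1) : ℂ) * a ^ (n - i) * c (i + 1)) n]
    simp only [Nat.choose_self, Nat.choose_succ_self, Nat.cast_zero, Nat.choose_zero_right,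
      Nat.cast_one, zero_mul, add_zero, Nat.sub_zero, Nat.sub_self]
    have e3 : ∀ i ∈ Finset.range n,
        a * ((n.choose (i + 1) : ℂ) * a ^ (n - (i + 1)) * c (i + 1))
        = (n.choose (i + 1) : ℂ) * a ^ (n - i) * c (i + 1) := by
      intro i hi
      simp only [Finset.mem_range] at hi
      have : n - i = (n - (i + 1)) + 1 := by omega
      rw [this, pow_succ]
      ring
    rw [Finset.sum_congr rfl e3]
    ring
  rw [e2]
  ring

/-- Leibniz rule for `e^{at} * h(t)`. -/
lemma iteratedDeriv_exp_mul (a : ℂ) (h : ℂ → ℂ) (hh : Differentiable ℂ h) (n : ℕ) (t : ℂ) :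
    iteratedDeriv n (fun s => Complex.exp (a * s) * h s) t =
      Complex.exp (a * t) *
        ∑ i ∈ Finset.range (n + 1), (n.choose i : ℂ) * a ^ (n - i) * iteratedDeriv i h t := by
  have hd : ∀ i : ℕ, Differentiable ℂ (iteratedDeriv i h) := by
    intro i
    exact (hh.contDiff (n := (i + 1 : ℕ))).differentiable_iteratedDeriv i
      (by exact_mod_cast Nat.lt_succ_self i)
  induction n generalizing t with
  | zero => simp
  | succ n ih =>
    rw [iteratedDeriv_succ]
    have hF : iteratedDeriv n (fun s => Complex.exp (a * s) * h s)
        = fun s => Complex.exp (a * s) *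
          ∑ i ∈ Finset.range (n + 1), (n.choose i : ℂ) * a ^ (n - i) * iteratedDeriv i h s :=
      funext ih
    rw [hF]
    have hexp : HasDerivAt (fun s : ℂ => Complex.exp (a * s)) (Complex.exp (a * t) * a) t := by
      simpa using ((hasDerivAt_id t).const_mul a).cexp
    have hsum : HasDerivAt
        (fun s => ∑ i ∈ Finset.range (n + 1), (n.choose i : ℂ) * a ^ (n - i) * iteratedDeriv i h s)
        (∑ i ∈ Finset.range (n + 1), (n.choose i : ℂ) * a ^ (n - i) * iteratedDeriv (i + 1) h t)
        t := by
      apply HasDerivAt.fun_sum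
      intro i _
      have : HasDerivAt (iteratedDeriv i h) (iteratedDeriv (i + 1) h t) t := by
        rw [iteratedDeriv_succ]
        exact ((hd i) t).hasDerivAt
      exact this.const_mul _
    rw [(hexp.fun_mul hsum).deriv]
    rw [← pascal_sum a n (fun i => iteratedDeriv i h t)]
    ring

/-- For `0 < q < 1`, real `x > 0` and `n ≥ 0`,
`β_{n,q}(x) = Σ_{i=0}^{n} C(n,i) q^{xi} β_{i,q} [x]_q^{n-i}`, where `β_{i,q} = β_{i,q}(0)`. -/
theorem qBernoulliPoly_addition (q : ℝ) (hq0 : 0 < q) (hq1 : q < 1)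
    (x : ℝ) (hx : 0 < x) (n : ℕ) :
    qBernoulliPoly q n x =
    ∑ i ∈ Finset.range (n + 1),
      (n.choose i : ℂ) * ((q ^ (x * (i : ℝ)) : ℝ) : ℂ) * qBernoulliPoly q i 0 *
        ((qNum q x : ℝ) : ℂ) ^ (n - i) := by
  set a : ℂ := ((qNum q x : ℝ) : ℂ)
  set b : ℂ := ((q ^ x : ℝ) : ℂ)
  have hg : Differentiable ℂ (qBernoulliPolyGen q 0) :=
    qBernoulliPolyGen_differentiable q hq0 hq1
  have hh : Differentiable ℂ (fun t : ℂ => qBernoulliPolyGen q 0 (b * t)) :=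
    hg.comp (differentiable_id.const_mul b)
  have hgen : qBernoulliPolyGen q x
      = fun t => Complex.exp (a * t) * (fun s : ℂ => qBernoulliPolyGen q 0 (b * s)) t :=
    funext (qBernoulliPolyGen_eq q hq0 hq1 x)
  rw [qBernoulliPoly, hgen, iteratedDeriv_exp_mul a _ hh n 0]
  rw [mul_zero, Complex.exp_zero, one_mul]
  apply Finset.sum_congr rfl
  intro i _
  have hscale : iteratedDeriv i (fun t : ℂ => qBernoulliPolyGen q 0 (b * t)) 0
      = b ^ i * qBernoulliPoly q i 0 := by
    rw [iteratedDeriv_comp_const_mul (hg.contDiff (n := (i : ℕ))) b]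
    show b ^ i * iteratedDeriv i (qBernoulliPolyGen q 0) (b * 0) = _
    rw [mul_zero, qBernoulliPoly]
  rw [hscale]
  have hb : b ^ i = ((q ^ (x * (i : ℝ)) : ℝ) : ℂ) := by
    rw [Real.rpow_mul hq0.le, Real.rpow_natCast, Complex.ofReal_pow]
  rw [hb]
  ring
end
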